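/- arXiv:1502.05834 — 8 statements merged into one kernel-verified Lean document; each statement's English description precedes it below -/
import Mathlib

section
/- Let L be a normal bimodal logic such that (i) the commutator [K3, K] is contained in L, and (ii) the product 2-frame (ω+1,>) × F is a frame for L, where F is a countably infinite one-step rooted frame. Then L does not have the finite model property. -/
set_option linter.unusedVariables false

/-! ### Unimodal syntax -/

/-- Unimodal formulas: propositional variables, falsum, implication and one box.
Other Booleans and the diamond are defined from these. -/
inductive UForm : Type
  | var : ℕ → UForm
  | bot : UForm
  | imp : UForm → UForm → UForm
  | box : UForm → UForm

namespace UForm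
def neg (φ : UForm) : UForm := imp φ bot
def dia (φ : UForm) : UForm := neg (box (neg φ))
end UForm

/-! ### Bimodal syntax -/

/-- Bimodal formulas: propositional variables, falsum, implication and boxes `□0`, `□1`. -/
inductive BForm : Type
  | var : ℕ → BForm
  | bot : BForm
  | imp : BForm → BForm → BForm
  | box : Fin 2 → BForm → BForm

namespace BForm
def neg (φ : BForm) : BForm := imp φ bot
def top : BForm := neg bot
def and (φ ψ : BForm) : BForm := neg (imp φ (neg ψ))
def or (φ ψ : BForm) : BForm := imp (neg φ) ψ
def dia (i : Fin 2) (φ : BForm) : BForm := neg (box i (neg φ))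

/-- Substitution of formulas for propositional variables. -/
def subst (s : ℕ → BForm) : BForm → BForm
  | var n => s n
  | bot => bot
  | imp φ ψ => imp (subst s φ) (subst s ψ)
  | box i φ => box i (subst s φ)
end BForm

/-- Embedding of unimodal formulas into bimodal ones, reading the unimodal box as `□i`. -/
def UForm.embed (i : Fin 2) : UForm → BForm
  | var n => .var n
  | bot => .bot
  | imp φ ψ => .imp (embed i φ) (embed i ψ)
  | box φ => .box i (embed i φ)

/-! ### Frames and semantics -/

/-- A unimodal Kripke frame: a nonempty set with a binary relation. -/
structure Frame1 : Type 1 where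
  W : Type
  ne : Nonempty W
  R : W → W → Prop

/-- Truth of a unimodal formula at a point of a model based on a unimodal frame. -/
def UTruth (F : Frame1) (V : ℕ → F.W → Prop) : F.W → UForm → Prop
  | w, .var n => V n w
  | _, .bot => False
  | w, .imp φ ψ => UTruth F V w φ → UTruth F V w ψ
  | w, .box φ => ∀ v, F.R w v → UTruth F V v φ

/-- Validity of a unimodal formula in a unimodal frame. -/
def UValid (F : Frame1) (φ : UForm) : Prop := ∀ V w, UTruth F V w φ

/-- `F` is a frame for the set `L` of unimodal formulas. -/
def UFrameFor (F : Frame1) (L : Set UForm) : Prop := ∀ φ ∈ L, UValid F φ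

/-- The unimodal logic determined by a class of unimodal frames. -/
def ULog (C : Set Frame1) : Set UForm := { φ | ∀ F ∈ C, UValid F φ }

/-- The unimodal logic of a single unimodal frame. -/
def LogOf (F : Frame1) : Set UForm := { φ | UValid F φ }

/-- A 2-frame: a nonempty set with two binary relations `R 0` and `R 1`. -/
structure Frame2 : Type 1 where
  W : Type
  ne : Nonempty W
  R : Fin 2 → W → W → Prop

/-- Truth of a bimodal formula at a point of a model based on a 2-frame. -/
def BTruth (F : Frame2) (V : ℕ → F.W → Prop) : F.W → BForm → Prop
  | w, .var n => V n w
  | _, .bot => False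
  | w, .imp φ ψ => BTruth F V w φ → BTruth F V w ψ
  | w, .box i φ => ∀ v, F.R i w v → BTruth F V v φ

/-- Validity of a bimodal formula in a 2-frame. -/
def BValid (F : Frame2) (φ : BForm) : Prop := ∀ V w, BTruth F V w φ

/-- `F` is a frame for the set `L` of bimodal formulas. -/
def FrameFor (F : Frame2) (L : Set BForm) : Prop := ∀ φ ∈ L, BValid F φ

/-! ### Normal bimodal logics -/

/-- `φ` is a propositional tautology: it is true under every assignment of truth values
to formulas that respects `⊥` and `→` (so variables and boxed formulas act as atoms). -/
def BTaut (φ : BForm) : Prop :=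
  ∀ v : BForm → Prop, (¬ v .bot) → (∀ a b, v (.imp a b) ↔ (v a → v b)) → v φ

/-- A normal bimodal logic: contains all propositional tautologies and the K-axioms for
both boxes, and is closed under modus ponens, substitution and necessitation. -/
structure IsLogic (L : Set BForm) : Prop where
  taut : ∀ φ, BTaut φ → φ ∈ L
  kax : ∀ (i : Fin 2) (φ ψ : BForm),
    BForm.imp (.box i (.imp φ ψ)) (.imp (.box i φ) (.box i ψ)) ∈ L
  mp : ∀ φ ψ, BForm.imp φ ψ ∈ L → φ ∈ L → ψ ∈ L
  subst : ∀ φ s, φ ∈ L → BForm.subst s φ ∈ L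
  nec : ∀ (i : Fin 2) (φ : BForm), φ ∈ L → BForm.box i φ ∈ L

/-- The smallest normal bimodal logic containing a given set of bimodal formulas. -/
def SmallestLogic (S : Set BForm) : Set BForm := ⋂₀ { L : Set BForm | IsLogic L ∧ S ⊆ L }

/-- The fusion `L0 ⊕ L1`: the smallest normal bimodal logic containing `L0` (in `□0`)
and `L1` (in `□1`). -/
def Fusion (L0 L1 : Set UForm) : Set BForm :=
  SmallestLogic ((UForm.embed 0 '' L0) ∪ (UForm.embed 1 '' L1))

/-- Left commutativity axiom `□1□0 p → □0□1 p`. -/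
def lcomAx : BForm := .imp (.box 1 (.box 0 (.var 0))) (.box 0 (.box 1 (.var 0)))

/-- Right commutativity axiom `□0□1 p → □1□0 p`. -/
def rcomAx : BForm := .imp (.box 0 (.box 1 (.var 0))) (.box 1 (.box 0 (.var 0)))

/-- Confluence axiom `◇0□1 p → □1◇0 p`. -/
def confAx : BForm := .imp (.dia 0 (.box 1 (.var 0))) (.box 1 (.dia 0 (.var 0)))

/-- The commutator `[L0, L1]`: the smallest normal bimodal logic containing the fusion
together with the two commutativity axioms and the confluence axiom. -/
def Commutator (L0 L1 : Set UForm) : Set BForm :=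
  SmallestLogic ((UForm.embed 0 '' L0) ∪ (UForm.embed 1 '' L1) ∪ {lcomAx, rcomAx, confAx})

/-- `[L0, L1]^lcom`: the smallest normal bimodal logic containing the fusion together
with the left commutativity axiom only. -/
def CommutatorLcom (L0 L1 : Set UForm) : Set BForm :=
  SmallestLogic ((UForm.embed 0 '' L0) ∪ (UForm.embed 1 '' L1) ∪ {lcomAx})

/-- A normal bimodal logic has the finite model property if every bimodal formula not in
`L` fails at some point of a model based on a finite frame for `L`. -/
def HasFMP (L : Set BForm) : Prop :=
  ∀ φ, φ ∉ L → ∃ F : Frame2, Finite F.W ∧ FrameFor F L ∧ ∃ V w, ¬ BTruth F V w φ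

/-! ### Products -/

/-- The product of two unimodal frames. -/
def prodFrame (F0 F1 : Frame1) : Frame2 where
  W := F0.W × F1.W
  ne := F0.ne.elim fun a => F1.ne.elim fun b => ⟨(a, b)⟩
  R := fun i a b =>
    if i = 0 then F0.R a.1 b.1 ∧ a.2 = b.2 else F1.R a.2 b.2 ∧ a.1 = b.1

/-- The product logic `L0 × L1` of two (Kripke complete) unimodal logics: the set of
bimodal formulas valid in every product of a frame for `L0` with a frame for `L1`. -/
def ProdLogic (L0 L1 : Set UForm) : Set BForm :=
  { φ | ∀ F0 F1 : Frame1, UFrameFor F0 L0 → UFrameFor F1 L1 →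
      BValid (prodFrame F0 F1) φ }

/-! ### Relation properties and particular unimodal logics -/

/-- Weak connectedness. -/
def WeaklyConnected {W : Type*} (R : W → W → Prop) : Prop :=
  ∀ x y z, R x y → R x z → y = z ∨ R y z ∨ R z y

/-- Pseudo-transitivity. -/
def PseudoTransitive {W : Type*} (R : W → W → Prop) : Prop :=
  ∀ x y z, R x y → R y z → x = z ∨ R x z

/-- `K`: the unimodal logic determined by all frames. -/
def LogicK : Set UForm := ULog Set.univ

/-- `K3`: the unimodal logic determined by all weakly connected frames. -/
def LogicK3 : Set UForm := ULog { F | WeaklyConnected F.R }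

/-- `K4.3`: the unimodal logic determined by all transitive weakly connected frames. -/
def LogicK43 : Set UForm := ULog { F | Transitive F.R ∧ WeaklyConnected F.R }

/-- `S4.3`: the logic determined by all reflexive transitive weakly connected frames. -/
def LogicS43 : Set UForm :=
  ULog { F | Reflexive F.R ∧ Transitive F.R ∧ WeaklyConnected F.R }

/-- `S5`: the unimodal logic determined by all equivalence frames. -/
def LogicS5 : Set UForm := ULog { F | Equivalence F.R }

/-- `Diff`: the unimodal logic determined by all difference frames `(W, ≠)`. -/
def LogicDiff : Set UForm := ULog { F | ∀ a b, F.R a b ↔ a ≠ b }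

/-- `K4⁻`: the unimodal logic determined by all pseudo-transitive frames. -/
def LogicK4minus : Set UForm := ULog { F | PseudoTransitive F.R }

/-- The frame `(ω + 1, >)` on `{0, 1, 2, …, ω}`. -/
def omegaSuccGt : Frame1 := ⟨WithTop ℕ, ⟨⊤⟩, fun a b => b < a⟩

/-- The difference frame `(ω, ≠)`. -/
def omegaNeq : Frame1 := ⟨ℕ, ⟨0⟩, fun a b => a ≠ b⟩

/-- The frame `(ω, <)`. -/
def omegaLt : Frame1 := ⟨ℕ, ⟨0⟩, fun a b => a < b⟩

/-- The frame `(ω, ≤)`. -/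
def omegaLe : Frame1 := ⟨ℕ, ⟨0⟩, fun a b => a ≤ b⟩

/-- The frame `(ℚ, <)`. -/
def ratLt : Frame1 := ⟨ℚ, ⟨0⟩, fun a b => a < b⟩

/-- A unimodal frame is one-step rooted if some point sees every other point in one step. -/
def OneStepRooted (F : Frame1) : Prop := ∃ r : F.W, ∀ w : F.W, w ≠ r → F.R r w

/-- `F` contains an `(ω + 1, >)`-type chain: there are distinct points `x n` for `n ≤ ω`
such that for `n ≠ m`, `x n` is related to `x m` iff `n > m`. -/
def ContainsOmegaSuccChain (F : Frame1) : Prop :=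
  ∃ x : WithTop ℕ → F.W, Function.Injective x ∧
    ∀ n m : WithTop ℕ, n ≠ m → (F.R (x n) (x m) ↔ m < n)

/-- (lcom) for a 2-frame. -/
def Lcom (F : Frame2) : Prop :=
  ∀ x y z : F.W, F.R 0 x y → F.R 1 y z → ∃ u, F.R 1 x u ∧ F.R 0 u z

/-- (rcom) for a 2-frame. -/
def Rcom (F : Frame2) : Prop :=
  ∀ x y z : F.W, F.R 1 x y → F.R 0 y z → ∃ u, F.R 0 x u ∧ F.R 1 u z

/-- (conf) for a 2-frame. -/
def Conf (F : Frame2) : Prop :=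
  ∀ x y z : F.W, F.R 1 x y → F.R 0 x z → ∃ u, F.R 0 y u ∧ F.R 1 z u

namespace Kurucz
theorem btruth_and {G : Frame2} {V : ℕ → G.W → Prop} {w : G.W} {φ ψ : BForm} :
    BTruth G V w (BForm.and φ ψ) ↔ BTruth G V w φ ∧ BTruth G V w ψ := by
  have h : BTruth G V w (BForm.and φ ψ) ↔
      ((BTruth G V w φ → (BTruth G V w ψ → False)) → False) := Iff.rfl
  rw [h]; tauto

theorem btruth_dia {G : Frame2} {V : ℕ → G.W → Prop} {w : G.W} {i : Fin 2} {φ : BForm} :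
    BTruth G V w (BForm.dia i φ) ↔ ∃ v, G.R i w v ∧ BTruth G V v φ := by
  have h : BTruth G V w (BForm.dia i φ) ↔
      ((∀ v, G.R i w v → (BTruth G V v φ → False)) → False) := Iff.rfl
  rw [h]
  constructor
  · intro hh; by_contra hc; push_neg at hc; exact hh fun v hv ht => hc v hv ht
  · rintro ⟨v, hv, ht⟩ hh; exact hh v hv ht

theorem utruth_dia {F : Frame1} {V : ℕ → F.W → Prop} {w : F.W} {φ : UForm} :
    UTruth F V w (UForm.dia φ) ↔ ∃ v, F.R w v ∧ UTruth F V v φ := by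
  have h : UTruth F V w (UForm.dia φ) ↔
      ((∀ v, F.R w v → (UTruth F V v φ → False)) → False) := Iff.rfl
  rw [h]
  constructor
  · intro hh; by_contra hc; push_neg at hc; exact hh fun v hv ht => hc v hv ht
  · rintro ⟨v, hv, ht⟩ hh; exact hh v hv ht

def uand (a b : UForm) : UForm := UForm.neg (UForm.imp a (UForm.neg b))

theorem utruth_uand {F : Frame1} {V : ℕ → F.W → Prop} {w : F.W} {φ ψ : UForm} :
    UTruth F V w (uand φ ψ) ↔ UTruth F V w φ ∧ UTruth F V w ψ := by
  have h : UTruth F V w (uand φ ψ) ↔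
      ((UTruth F V w φ → (UTruth F V w ψ → False)) → False) := Iff.rfl
  rw [h]; tauto

/-! ### The formulas -/

def tv : BForm := BForm.var 0

/-- `A' := ¬t ∧ ◇₀ t` -/
def Af : BForm := BForm.and (BForm.neg tv) (BForm.dia 0 tv)

/-- `X₁ := t → □₀(¬t ∧ ¬◇₀t)` -/
def X1 : BForm := BForm.imp tv (BForm.box 0 (BForm.and (BForm.neg tv) (BForm.neg (BForm.dia 0 tv))))

def psi : BForm :=
  BForm.and (BForm.dia 0 (BForm.box 0 BForm.bot))
  (BForm.and (BForm.box 0 (BForm.dia 1 tv))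
  (BForm.and (BForm.box 1 (BForm.imp (BForm.dia 0 tv) (BForm.dia 0 Af)))
  (BForm.and (BForm.box 1 (BForm.imp (BForm.dia 0 Af)
      (BForm.dia 0 (BForm.and Af (BForm.box 0 (BForm.neg Af))))))
  (BForm.and (BForm.box 0 (BForm.box 1 X1))
    (BForm.box 1 (BForm.box 0 (BForm.box 0 X1)))))))

/-- weak connectedness axiom -/
def w3 : UForm :=
  UForm.imp (UForm.dia (UForm.var 0))
  (UForm.imp (UForm.dia (UForm.var 1))
  (UForm.imp (UForm.neg (UForm.dia (uand (UForm.var 0) (UForm.var 1))))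
  (UForm.imp (UForm.neg (UForm.dia (uand (UForm.var 0) (UForm.dia (UForm.var 1)))))
    (UForm.dia (uand (UForm.var 1) (UForm.dia (UForm.var 0)))))))

theorem w3_valid {F : Frame1} (h : WeaklyConnected F.R) : UValid F w3 := by
  intro V x
  intro h1 h2 h3 h4
  obtain ⟨y, hxy, hpy⟩ := utruth_dia.mp h1
  obtain ⟨z, hxz, hqz⟩ := utruth_dia.mp h2
  rcases h x y z hxy hxz with heq | hyz | hzy
  · exact absurd (utruth_dia.mpr ⟨y, hxy, utruth_uand.mpr ⟨hpy, heq ▸ hqz⟩⟩) h3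
  · exact absurd (utruth_dia.mpr ⟨y, hxy, utruth_uand.mpr
      ⟨hpy, utruth_dia.mpr ⟨z, hyz, hqz⟩⟩⟩) h4
  · exact utruth_dia.mpr ⟨z, hxz, utruth_uand.mpr ⟨hqz, utruth_dia.mpr ⟨y, hzy, hpy⟩⟩⟩

theorem w3_mem : w3 ∈ LogicK3 := fun _ hF => w3_valid hF

/-! ### Axioms belong to the commutator -/

theorem subset_smallestLogic {S : Set BForm} : S ⊆ SmallestLogic S := fun φ hφ =>
  Set.mem_sInter.mpr fun _ hL => hL.2 hφ

theorem lcomAx_mem {L0 L1 : Set UForm} : lcomAx ∈ Commutator L0 L1 :=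
  subset_smallestLogic (Set.mem_union_right _ (by simp))

theorem rcomAx_mem {L0 L1 : Set UForm} : rcomAx ∈ Commutator L0 L1 :=
  subset_smallestLogic (Set.mem_union_right _ (by simp))

theorem confAx_mem {L0 L1 : Set UForm} : confAx ∈ Commutator L0 L1 :=
  subset_smallestLogic (Set.mem_union_right _ (by simp))

theorem w3e_mem {L1 : Set UForm} : UForm.embed 0 w3 ∈ Commutator LogicK3 L1 :=
  subset_smallestLogic (Set.mem_union_left _ (Set.mem_union_left _ ⟨w3, w3_mem, rfl⟩))

/-! ### Frame correspondence -/

theorem lcom_of_valid (G : Frame2) (h : BValid G lcomAx) : Lcom G := by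
  intro x y z hxy hyz
  have hv := h (fun _ v => ∃ u, G.R 1 x u ∧ G.R 0 u v) x
  exact hv (fun u hu v hv' => ⟨u, hu, hv'⟩) y hxy z hyz

theorem rcom_of_valid (G : Frame2) (h : BValid G rcomAx) : Rcom G := by
  intro x y z hxy hyz
  have hv := h (fun _ v => ∃ u, G.R 0 x u ∧ G.R 1 u v) x
  exact hv (fun u hu v hv' => ⟨u, hu, hv'⟩) y hxy z hyz

theorem conf_of_valid (G : Frame2) (h : BValid G confAx) : Conf G := by
  intro x y z hxy hxz
  have hv := h (fun _ v => G.R 1 z v) x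
  have hpre : BTruth G (fun _ v => G.R 1 z v) x (BForm.dia 0 (BForm.box 1 (BForm.var 0))) :=
    btruth_dia.mpr ⟨z, hxz, fun u hu => hu⟩
  have hcon := btruth_dia.mp (hv hpre y hxy)
  obtain ⟨u, hyu, hzu⟩ := hcon
  exact ⟨u, hyu, hzu⟩

theorem embed_truth (G : Frame2) (i : Fin 2) (V : ℕ → G.W → Prop) :
    ∀ (φ : UForm) (w : G.W),
      BTruth G V w (UForm.embed i φ) ↔ UTruth ⟨G.W, G.ne, G.R i⟩ V w φ := by
  intro φ
  induction φ with
  | var n => intro w; exact Iff.rfl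
  | bot => intro w; exact Iff.rfl
  | imp a b iha ihb => intro w; exact imp_congr (iha w) (ihb w)
  | box a ih => intro w; exact forall_congr' fun v => imp_congr Iff.rfl (ih v)

theorem wconn_of_valid (G : Frame2) (h : BValid G (UForm.embed 0 w3)) :
    WeaklyConnected (G.R 0) := by
  intro x y z hxy hxz
  by_contra hcon
  push_neg at hcon
  obtain ⟨hne, hnyz, hnzy⟩ := hcon
  set V : ℕ → G.W → Prop := fun n v => if n = 0 then v = y else v = z with hVdef
  have hw := (embed_truth G 0 V w3 x).mp (h V x)
  have h1 : UTruth ⟨G.W, G.ne, G.R 0⟩ V x (UForm.dia (UForm.var 0)) :=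
    utruth_dia.mpr ⟨y, hxy, show V 0 y by simp [hVdef]⟩
  have h2 : UTruth ⟨G.W, G.ne, G.R 0⟩ V x (UForm.dia (UForm.var 1)) :=
    utruth_dia.mpr ⟨z, hxz, show V 1 z by simp [hVdef]⟩
  have h3 : ¬ UTruth ⟨G.W, G.ne, G.R 0⟩ V x (UForm.dia (uand (UForm.var 0) (UForm.var 1))) := by
    rw [utruth_dia]
    rintro ⟨v, hv, hu⟩
    obtain ⟨hv0, hv1⟩ := utruth_uand.mp hu
    simp only [hVdef, if_pos rfl] at hv0
    simp only [hVdef, if_neg (by norm_num : (1:ℕ) ≠ 0)] at hv1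
    exact hne (hv0 ▸ hv1)
  have h4 : ¬ UTruth ⟨G.W, G.ne, G.R 0⟩ V x
      (UForm.dia (uand (UForm.var 0) (UForm.dia (UForm.var 1)))) := by
    rw [utruth_dia]
    rintro ⟨v, hv, hu⟩
    obtain ⟨hv0, hd⟩ := utruth_uand.mp hu
    obtain ⟨v2, hvv2, hv2⟩ := utruth_dia.mp hd
    simp only [hVdef, if_pos rfl] at hv0
    simp only [hVdef, if_neg (by norm_num : (1:ℕ) ≠ 0)] at hv2
    rw [hv0, hv2] at hvv2
    exact hnyz hvv2
  have hcc := hw h1 h2 h3 h4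
  obtain ⟨v, hv, hu⟩ := utruth_dia.mp hcc
  obtain ⟨hv1, hd⟩ := utruth_uand.mp hu
  obtain ⟨v2, hvv2, hv2⟩ := utruth_dia.mp hd
  simp only [hVdef, if_neg (by norm_num : (1:ℕ) ≠ 0)] at hv1
  simp only [hVdef, if_pos rfl] at hv2
  rw [hv1, hv2] at hvv2
  exact hnzy hvv2


/-! ### Depth in a 2-frame -/

/-- `Dg G k x`: there is an outgoing `R0`-path of length `k` from `x`. -/
def Dg (G : Frame2) : ℕ → G.W → Prop
  | 0, _ => True
  | k+1, x => ∃ y, G.R 0 x y ∧ Dg G k y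

theorem dg_mono {G : Frame2} : ∀ {k : ℕ} {x : G.W}, Dg G (k+1) x → Dg G k x
  | 0, _, _ => trivial
  | k+1, _, ⟨y, hxy, hy⟩ => ⟨y, hxy, dg_mono hy⟩

theorem dg_le {G : Frame2} {j k : ℕ} (h : j ≤ k) {x : G.W} (hd : Dg G k x) : Dg G j x := by
  induction h with
  | refl => exact hd
  | step _ ih => exact ih (dg_mono hd)

theorem dg_conf {G : Frame2} (hc : Conf G) :
    ∀ {k : ℕ} {x y : G.W}, G.R 1 x y → Dg G k x → Dg G k y
  | 0, _, _, _, _ => trivial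
  | k+1, x, y, hxy, ⟨x1, hx1, hd⟩ => by
      obtain ⟨m, hym, hx1m⟩ := hc x y x1 hxy hx1
      exact ⟨m, hym, dg_conf hc hx1m hd⟩

theorem dg_rcom {G : Frame2} (hr : Rcom G) :
    ∀ {k : ℕ} {x y : G.W}, G.R 1 x y → Dg G k y → Dg G k x
  | 0, _, _, _, _ => trivial
  | k+1, x, y, hxy, ⟨y1, hy1, hd⟩ => by
      obtain ⟨v, hxv, hv1⟩ := hr x y y1 hxy hy1
      exact ⟨v, hxv, dg_rcom hr hv1 hd⟩

/-! ### The core lemma: no finite model of `psi` -/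

theorem core (G : Frame2) (hfin : Finite G.W) (hwc : WeaklyConnected (G.R 0))
    (hl : Lcom G) (hr : Rcom G) (hc : Conf G)
    (V : ℕ → G.W → Prop) (a : G.W) (hpsi : BTruth G V a psi) : False := by
  obtain ⟨hC1, hrest⟩ := btruth_and.mp hpsi
  obtain ⟨hC2, hrest⟩ := btruth_and.mp hrest
  obtain ⟨hC5, hrest⟩ := btruth_and.mp hrest
  obtain ⟨hC6, hrest⟩ := btruth_and.mp hrest
  obtain ⟨hD1, hD3⟩ := btruth_and.mp hrest
  -- C1 : a dead end below a
  obtain ⟨w0, haw0, hdead⟩ := btruth_dia.mp hC1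
  have main : ∀ k : ℕ, ∃ w, G.R 0 a w ∧ Dg G k w ∧ ¬ Dg G (k+1) w := by
    intro k
    induction k with
    | zero => exact ⟨w0, haw0, trivial, fun ⟨y, hy, _⟩ => hdead y hy⟩
    | succ k ih =>
      obtain ⟨w, haw, hdk, hndk⟩ := ih
      -- the t-mate u of w
      obtain ⟨u, hwu, htu⟩ := btruth_dia.mp (hC2 w haw)
      have hdu : Dg G k u := dg_conf hc hwu hdk
      have hndu : ¬ Dg G (k+1) u := fun h => hndk (dg_rcom hr hwu h)
      -- the spy σ above u
      obtain ⟨σ, haσ, hσu⟩ := hl a w u haw hwu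
      -- σ sees an A-point, hence a minimal A-point x
      have hdiaA : BTruth G V σ (BForm.dia 0 Af) :=
        hC5 σ haσ (btruth_dia.mpr ⟨u, hσu, htu⟩)
      obtain ⟨x, hσx, hAx⟩ := btruth_dia.mp (hC6 σ haσ hdiaA)
      obtain ⟨hAfx, hxmin⟩ := btruth_and.mp hAx
      obtain ⟨hntx, hdtx⟩ := btruth_and.mp hAfx
      -- X1 at u (u is an R1-successor of the R0-successor w of a)
      have hX1u := hD1 w haw u hwu htu
      -- x sees u
      have hxu : G.R 0 x u := by
        rcases hwc σ x u hσx hσu with heq | hxu | hux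
        · exact absurd (heq ▸ htu) hntx
        · exact hxu
        · obtain ⟨hv1, hv2⟩ := btruth_and.mp (hX1u x hux)
          exact (hv2 hdtx).elim
      have hdx : Dg G (k+1) x := ⟨u, hxu, hdu⟩
      have hndx : ¬ Dg G (k+2) x := by
        rintro ⟨s, hxs, hds⟩
        have hnAs : ¬ BTruth G V s Af := hxmin s hxs
        by_cases hts : BTruth G V s tv
        · rcases hwc x s u hxs hxu with heq | hsu | hus
          · exact hndu (heq ▸ hds)
          · obtain ⟨hv1, _⟩ := btruth_and.mp (hD3 σ haσ x hσx s hxs hts u hsu)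
            exact hv1 htu
          · obtain ⟨hv1, _⟩ := btruth_and.mp (hX1u s hus)
            exact hv1 hts
        · rcases hwc x s u hxs hxu with heq | hsu | hus
          · exact hts (heq ▸ htu)
          · exact hnAs (btruth_and.mpr ⟨hts, btruth_dia.mpr ⟨u, hsu, htu⟩⟩)
          · exact hndu (dg_mono ⟨s, hus, hds⟩)
      -- pull x back into the successors of a
      obtain ⟨w', haw', hw'x⟩ := hr a σ x haσ hσx
      exact ⟨w', haw', dg_rcom hr hw'x hdx, fun h => hndx (dg_conf hc hw'x h)⟩
  choose f hf1 hf2 using main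
  obtain ⟨i, j, hij, hfe⟩ := Finite.exists_ne_map_eq_of_infinite f
  have key : ∀ {i j : ℕ}, i < j → f i = f j → False := by
    intro i j hlt he
    exact (hf2 i).2 (he ▸ dg_le (by omega) (hf2 j).1)
  rcases lt_or_gt_of_ne hij with h | h
  · exact key h hfe
  · exact key h hfe.symm


/-! ### Satisfiability of `psi` in the product frame -/

theorem wt_lt_coe {x : WithTop ℕ} {n : ℕ} (h : x < ((n:ℕ) : WithTop ℕ)) :
    ∃ j : ℕ, x = ((j:ℕ) : WithTop ℕ) ∧ j < n := by
  cases x with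
  | top => exact absurd h (by simp)
  | coe j => exact ⟨j, rfl, WithTop.coe_lt_coe.mp h⟩

/-- first coordinate of a point of the product frame -/
def gfst {F : Frame1} (p : (prodFrame omegaSuccGt F).W) : WithTop ℕ := p.1

/-- second coordinate of a point of the product frame -/
def gsnd {F : Frame1} (p : (prodFrame omegaSuccGt F).W) : F.W := p.2

/-- building a point of the product frame -/
def mkp {F : Frame1} (x : WithTop ℕ) (u : F.W) : (prodFrame omegaSuccGt F).W := (x, u)

theorem grid_R0 {F : Frame1} (p q : (prodFrame omegaSuccGt F).W) :
    (prodFrame omegaSuccGt F).R 0 p q ↔ (gfst q < gfst p ∧ gsnd p = gsnd q) := Iff.rfl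

theorem grid_R1 {F : Frame1} (p q : (prodFrame omegaSuccGt F).W) :
    (prodFrame omegaSuccGt F).R 1 p q ↔ (F.R (gsnd p) (gsnd q) ∧ gfst p = gfst q) := Iff.rfl

theorem grid_sat (F : Frame1) (hinf : Infinite F.W) (r : F.W)
    (hr : ∀ w : F.W, w ≠ r → F.R r w) :
    ∃ (V : ℕ → (prodFrame omegaSuccGt F).W → Prop) (a : (prodFrame omegaSuccGt F).W),
      BTruth (prodFrame omegaSuccGt F) V a psi := by
  classical
  have hS : ({w : F.W | w ≠ r} : Set F.W).Infinite := by
    have heq : ({w : F.W | w ≠ r} : Set F.W) = Set.univ \ {r} := by ext v; simp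
    rw [heq]
    exact Set.infinite_univ.diff (Set.finite_singleton r)
  set E := hS.natEmbedding with hE
  set e : ℕ → F.W := fun n => (E n : F.W) with he_def
  have he : ∀ n, e n ≠ r := fun n => (E n).2
  have einj : Function.Injective e := fun m n h => E.injective (Subtype.ext h)
  set Gr := prodFrame omegaSuccGt F with hGr
  set V : ℕ → Gr.W → Prop :=
    fun _ p => ∃ n : ℕ, gfst p = ((n:ℕ) : WithTop ℕ) ∧ gsnd p = e n with hV
  set a : Gr.W := mkp ⊤ r with ha
  have htv : ∀ p : Gr.W, BTruth Gr V p tv ↔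
      (∃ n : ℕ, gfst p = ((n:ℕ) : WithTop ℕ) ∧ gsnd p = e n) := fun p => Iff.rfl
  -- X1 holds at every point
  have hX1 : ∀ p : Gr.W, BTruth Gr V p X1 := by
    intro p hpt
    obtain ⟨n, hp1, hp2⟩ := (htv p).mp hpt
    intro q hq
    obtain ⟨hq1, hq2⟩ := (grid_R0 p q).mp hq
    refine btruth_and.mpr ⟨?_, ?_⟩
    · rintro ⟨m, hm1, hm2⟩
      have hmn : m = n := einj (by rw [← hm2, ← hq2, hp2])
      rw [hm1, hmn, ← hp1] at hq1
      exact lt_irrefl _ hq1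
    · intro hd
      obtain ⟨q2, hqq2, hq2t⟩ := btruth_dia.mp hd
      obtain ⟨m, hm1, hm2⟩ := (htv q2).mp hq2t
      obtain ⟨hq21, hq22⟩ := (grid_R0 q q2).mp hqq2
      have hmn : m = n := einj (by rw [← hm2, ← hq22, ← hq2, hp2])
      have hlt : gfst q2 < gfst p := lt_trans hq21 hq1
      rw [hm1, hmn, ← hp1] at hlt
      exact lt_irrefl _ hlt
  refine ⟨V, a, ?_⟩
  refine btruth_and.mpr ⟨?_, btruth_and.mpr ⟨?_, btruth_and.mpr ⟨?_, btruth_and.mpr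
    ⟨?_, btruth_and.mpr ⟨?_, ?_⟩⟩⟩⟩⟩
  · -- C1 : ◇₀ □₀ ⊥
    refine btruth_dia.mpr ⟨mkp ((0:ℕ) : WithTop ℕ) r, (grid_R0 _ _).mpr ⟨?_, rfl⟩, ?_⟩
    · exact WithTop.coe_lt_top 0
    · intro v hv
      obtain ⟨hv1, _⟩ := (grid_R0 _ v).mp hv
      obtain ⟨j, _, hj⟩ := wt_lt_coe hv1
      exact absurd hj (Nat.not_lt_zero j)
  · -- C2 : □₀ ◇₁ t
    intro w hw
    obtain ⟨hw1, hw2⟩ := (grid_R0 a w).mp hw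
    have hw1' : gfst w < ⊤ := hw1
    obtain ⟨n, hn⟩ : ∃ n : ℕ, gfst w = ((n:ℕ) : WithTop ℕ) := by
      cases hx : gfst w with
      | top => rw [hx] at hw1'; exact absurd hw1' (lt_irrefl _)
      | coe n => exact ⟨n, rfl⟩
    refine btruth_dia.mpr ⟨mkp ((n:ℕ) : WithTop ℕ) (e n), (grid_R1 _ _).mpr ⟨?_, hn⟩,
      ⟨n, rfl, rfl⟩⟩
    have hw2' : (r : F.W) = gsnd w := hw2
    rw [← hw2']
    exact hr (e n) (he n)
  · -- C5 : □₁ (◇₀ t → ◇₀ A')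
    intro σ hσ hdt
    obtain ⟨_, hσ1⟩ := (grid_R1 a σ).mp hσ
    have hσ1' : (⊤ : WithTop ℕ) = gfst σ := hσ1
    obtain ⟨p1, hp1, hp1t⟩ := btruth_dia.mp hdt
    obtain ⟨m, hm1, hm2⟩ := (htv p1).mp hp1t
    obtain ⟨_, hcol⟩ := (grid_R0 σ p1).mp hp1
    have hσ2 : gsnd σ = e m := by rw [hcol, hm2]
    refine btruth_dia.mpr ⟨mkp (((m+1:ℕ)) : WithTop ℕ) (gsnd σ), (grid_R0 _ _).mpr
      ⟨?_, rfl⟩, ?_⟩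
    · rw [← hσ1']; exact WithTop.coe_lt_top (m+1)
    · refine btruth_and.mpr ⟨?_, ?_⟩
      · rintro ⟨k, hk1, hk2⟩
        have hk1' : ((m+1:ℕ) : WithTop ℕ) = ((k:ℕ) : WithTop ℕ) := hk1
        have hk' : m+1 = k := by exact_mod_cast hk1'
        have hkm : k = m := einj (by
          have hk2' : gsnd σ = e k := hk2
          rw [← hk2', hσ2])
        omega
      · refine btruth_dia.mpr ⟨mkp ((m:ℕ) : WithTop ℕ) (gsnd σ), (grid_R0 _ _).mpr
          ⟨?_, rfl⟩, ⟨m, rfl, hσ2⟩⟩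
        exact WithTop.coe_lt_coe.mpr (Nat.lt_succ_self m)
  · -- C6 : □₁ (◇₀ A' → ◇₀ (A' ∧ □₀ ¬A'))
    intro σ hσ hdA
    obtain ⟨_, hσ1⟩ := (grid_R1 a σ).mp hσ
    have hσ1' : (⊤ : WithTop ℕ) = gfst σ := hσ1
    obtain ⟨p1, hp1, hp1A⟩ := btruth_dia.mp hdA
    obtain ⟨_, hdt1⟩ := btruth_and.mp hp1A
    obtain ⟨p2, hp2, hp2t⟩ := btruth_dia.mp hdt1
    obtain ⟨m, hm1, hm2⟩ := (htv p2).mp hp2t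
    obtain ⟨_, hcol1⟩ := (grid_R0 σ p1).mp hp1
    obtain ⟨_, hcol2⟩ := (grid_R0 p1 p2).mp hp2
    have hσ2 : gsnd σ = e m := by rw [hcol1, hcol2, hm2]
    refine btruth_dia.mpr ⟨mkp (((m+1:ℕ)) : WithTop ℕ) (gsnd σ), (grid_R0 _ _).mpr
      ⟨?_, rfl⟩, ?_⟩
    · rw [← hσ1']; exact WithTop.coe_lt_top (m+1)
    refine btruth_and.mpr ⟨btruth_and.mpr ⟨?_, ?_⟩, ?_⟩
    · rintro ⟨k, hk1, hk2⟩
      have hk1' : ((m+1:ℕ) : WithTop ℕ) = ((k:ℕ) : WithTop ℕ) := hk1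
      have hk' : m+1 = k := by exact_mod_cast hk1'
      have hkm : k = m := einj (by
        have hk2' : gsnd σ = e k := hk2
        rw [← hk2', hσ2])
      omega
    · refine btruth_dia.mpr ⟨mkp ((m:ℕ) : WithTop ℕ) (gsnd σ), (grid_R0 _ _).mpr
        ⟨?_, rfl⟩, ⟨m, rfl, hσ2⟩⟩
      exact WithTop.coe_lt_coe.mpr (Nat.lt_succ_self m)
    · -- minimality of the A-point
      intro s hs hAs
      obtain ⟨hs1, hs2⟩ := (grid_R0 _ s).mp hs
      obtain ⟨hnts, hdts⟩ := btruth_and.mp hAs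
      have hs1' : gfst s < ((m+1:ℕ) : WithTop ℕ) := hs1
      obtain ⟨j, hj1, hjlt⟩ := wt_lt_coe hs1'
      have hs2' : gsnd s = e m := by
        have : gsnd σ = gsnd s := hs2
        rw [← this, hσ2]
      rcases Nat.lt_succ_iff_lt_or_eq.mp hjlt with hjm | hjm
      · -- j < m : s cannot see a t-point
        obtain ⟨s2, hss2, hs2t⟩ := btruth_dia.mp hdts
        obtain ⟨k, hk1, hk2⟩ := (htv s2).mp hs2t
        obtain ⟨hs21, hs22⟩ := (grid_R0 s s2).mp hss2
        have hkm : k = m := einj (by rw [← hk2, ← hs22, hs2'])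
        rw [hk1, hkm, hj1] at hs21
        have hmj : m < j := by exact_mod_cast hs21
        omega
      · -- j = m : s is the t-point itself
        exact hnts ⟨m, by rw [hj1, hjm], hs2'⟩
  · -- D1 : □₀ □₁ X1
    intro w _ u _
    exact hX1 u
  · -- D3 : □₁ □₀ □₀ X1
    intro σ _ x _ s _
    exact hX1 s


end Kurucz

/-- **Theorem 1 (Kurucz).** If `L` is a normal bimodal logic containing the commutator
`[K3, K]`, and the product frame `(ω+1, >) × F` is a frame for `L` for some countably
infinite one-step rooted frame `F`, then `L` does not have the finite model property. -/
theorem no_fmp_of_K3_K (L : Set BForm) (hL : IsLogic L)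
    (hcomm : Commutator LogicK3 LogicK ⊆ L)
    (F : Frame1) (hcount : Countable F.W) (hinf : Infinite F.W)
    (hroot : OneStepRooted F)
    (hfr : FrameFor (prodFrame omegaSuccGt F) L) :
    ¬ HasFMP L := by
  intro hfmp
  obtain ⟨r, hroot⟩ := hroot
  obtain ⟨V, a, hV⟩ := Kurucz.grid_sat F hinf r hroot
  set φ := BForm.imp Kurucz.psi BForm.bot with hφdef
  have hφ : φ ∉ L := by
    intro hmem
    exact (hfr φ hmem V a) hV
  obtain ⟨G, hGfin, hGfr, V', w', hw'⟩ := hfmp φ hφ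
  have hψ' : BTruth G V' w' Kurucz.psi := by
    by_contra hc
    exact hw' fun h => absurd h hc
  have hwc := Kurucz.wconn_of_valid G (hGfr _ (hcomm Kurucz.w3e_mem))
  have hl := Kurucz.lcom_of_valid G (hGfr _ (hcomm Kurucz.lcomAx_mem))
  have hrc := Kurucz.rcom_of_valid G (hGfr _ (hcomm Kurucz.rcomAx_mem))
  have hcf := Kurucz.conf_of_valid G (hGfr _ (hcomm Kurucz.confAx_mem))
  exact Kurucz.core G hGfin hwc hl hrc hcf V' w' hψ'
end

section
/- Neither [K3, K4⁻]^lcom nor [K3, Diff]^lcom has the finite model property. -/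
set_option linter.unusedVariables false

/-! ### Auxiliary development -/

open Classical

section Semantics

variable (F : Frame2) (V : ℕ → F.W → Prop)

lemma bt_imp (w : F.W) (a b : BForm) :
    BTruth F V w (.imp a b) ↔ (BTruth F V w a → BTruth F V w b) := Iff.rfl

lemma bt_bot (w : F.W) : BTruth F V w .bot ↔ False := Iff.rfl

lemma bt_box (w : F.W) (i : Fin 2) (a : BForm) :
    BTruth F V w (.box i a) ↔ ∀ v, F.R i w v → BTruth F V v a := Iff.rfl

lemma bt_var (w : F.W) (n : ℕ) : BTruth F V w (.var n) ↔ V n w := Iff.rfl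

lemma bt_neg (w : F.W) (a : BForm) :
    BTruth F V w (.neg a) ↔ ¬ BTruth F V w a := Iff.rfl

lemma bt_and (w : F.W) (a b : BForm) :
    BTruth F V w (.and a b) ↔ BTruth F V w a ∧ BTruth F V w b := by
  show (¬ (BTruth F V w a → ¬ BTruth F V w b)) ↔ _
  tauto

lemma bt_or (w : F.W) (a b : BForm) :
    BTruth F V w (.or a b) ↔ BTruth F V w a ∨ BTruth F V w b := by
  show ((BTruth F V w a → False) → BTruth F V w b) ↔ _
  tauto

lemma bt_dia (w : F.W) (i : Fin 2) (a : BForm) :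
    BTruth F V w (.dia i a) ↔ ∃ v, F.R i w v ∧ BTruth F V v a := by
  show (¬ ∀ v, F.R i w v → ¬ BTruth F V v a) ↔ _
  push_neg
  rfl

end Semantics

section USemantics

variable (F : Frame1) (V : ℕ → F.W → Prop)

def uAnd (a b : UForm) : UForm := .neg (.imp a (.neg b))
def uOr (a b : UForm) : UForm := .imp (.neg a) b

lemma ut_and (w : F.W) (a b : UForm) :
    UTruth F V w (uAnd a b) ↔ UTruth F V w a ∧ UTruth F V w b := by
  show (¬ (UTruth F V w a → ¬ UTruth F V w b)) ↔ _
  tauto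

lemma ut_or (w : F.W) (a b : UForm) :
    UTruth F V w (uOr a b) ↔ UTruth F V w a ∨ UTruth F V w b := by
  show ((UTruth F V w a → False) → UTruth F V w b) ↔ _
  tauto

end USemantics

/-! ### Soundness: the valid set of a frame is a normal logic -/

def validSet (F : Frame2) : Set BForm := { φ | BValid F φ }

lemma subst_truth (F : Frame2) (V : ℕ → F.W → Prop) (s : ℕ → BForm) :
    ∀ (φ : BForm) (w : F.W),
      BTruth F V w (BForm.subst s φ) ↔
        BTruth F (fun n v => BTruth F V v (s n)) w φ := by
  intro φ
  induction φ with
  | var n => intro w; rfl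
  | bot => intro w; rfl
  | imp a b iha ihb =>
      intro w
      show (BTruth F V w (a.subst s) → BTruth F V w (b.subst s)) ↔ _
      rw [iha, ihb]; rfl
  | box i a iha =>
      intro w
      show (∀ v, F.R i w v → BTruth F V v (a.subst s)) ↔ _
      constructor
      · intro h v hv; exact (iha v).mp (h v hv)
      · intro h v hv; exact (iha v).mpr (h v hv)

lemma isLogic_validSet (F : Frame2) : IsLogic (validSet F) := by
  constructor
  · intro φ hφ V w
    exact hφ (fun χ => BTruth F V w χ) (fun h => h) (fun a b => Iff.rfl)
  · intro i φ ψ V w h1 h2 v hv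
    exact h1 v hv (h2 v hv)
  · intro φ ψ h1 h2 V w
    exact h1 V w (h2 V w)
  · intro φ s h V w
    exact (subst_truth F V s φ w).mpr (h _ w)
  · intro i φ h V w v hv
    exact h V v

lemma smallest_sub {S : Set BForm} {M : Set BForm} (hM : IsLogic M) (hS : S ⊆ M) :
    SmallestLogic S ⊆ M := by
  intro φ hφ
  exact hφ M ⟨hM, hS⟩

lemma mem_smallest {S : Set BForm} {φ : BForm} (h : φ ∈ S) : φ ∈ SmallestLogic S := by
  intro M hM
  exact hM.2 h

/-! ### Embedding transfer -/

def frSlice (F : Frame2) (i : Fin 2) : Frame1 := ⟨F.W, F.ne, F.R i⟩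

lemma embed_truth (F : Frame2) (i : Fin 2) (V : ℕ → F.W → Prop) :
    ∀ (φ : UForm) (w : F.W),
      BTruth F V w (φ.embed i) ↔ UTruth (frSlice F i) V w φ := by
  intro φ
  induction φ with
  | var n => intro w; rfl
  | bot => intro w; rfl
  | imp a b iha ihb =>
      intro w
      show (BTruth F V w (a.embed i) → BTruth F V w (b.embed i)) ↔ _
      rw [iha, ihb]; rfl
  | box a iha =>
      intro w
      show (∀ v, F.R i w v → BTruth F V v (a.embed i)) ↔
        (∀ v, (frSlice F i).R w v → UTruth (frSlice F i) V v a)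
      constructor
      · intro h v hv; exact (iha v).mp (h v hv)
      · intro h v hv; exact (iha v).mpr (h v hv)

lemma embed_valid (F : Frame2) (i : Fin 2) (φ : UForm)
    (h : UValid (frSlice F i) φ) : BValid F (φ.embed i) := by
  intro V w
  exact (embed_truth F i V φ w).mpr (h V w)
/-! ### The formulas -/

def fP : BForm := .var 0
def fQ : BForm := .var 1
def fC : BForm := .var 2
def fE : BForm := .var 3

def g1 : BForm := .imp fQ (.dia 1 (.and fP (.neg fE)))
def g2 : BForm := .imp fP (.box 0 (.and (.neg fP) (.neg fQ)))
def g4 : BForm := .imp fQ (.box 1 (.neg fQ))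
def g5 : BForm := .imp fP (.box 1 (.neg fP))
def g7 : BForm := .imp fC (.dia 1 (.or fQ (.and fP fE)))
def g8 : BForm := .imp fP (.box 1 (.imp (.dia 0 fC) fC))
def g9 : BForm := .imp fC (.dia 1 fP)
def g10 : BForm := .imp (.and fP (.neg fE)) (.dia 0 (.dia 1 fC))
def g11 : BForm := .and (.neg (.and fP fQ)) (.and (.neg (.and fP fC)) (.neg (.and fQ fC)))

def gam : BForm :=
  .and g1 (.and g2 (.and g4 (.and g5 (.and g7 (.and g8 (.and g9 (.and g10 g11)))))))

def covB : ℕ → BForm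
  | 0 => gam
  | n+1 => .and gam (.and (.box 0 (covB n)) (.box 1 (covB n)))

def psi : BForm :=
  .and (covB 5)
    (.and (.box 1 (.imp (.dia 0 fP) (.dia 0 fQ)))
      (.and (.box 0 (.neg fP))
        (.dia 0 (.and fC (.dia 1 (.and fP fE))))))

def phi : BForm := .neg psi

/-! ### Extraction lemmas for `gam` -/

section GamFacts

variable {F : Frame2} {V : ℕ → F.W → Prop} {w : F.W}

lemma gam_g1 (h : BTruth F V w gam) (hq : V 1 w) :
    ∃ v, F.R 1 w v ∧ V 0 v ∧ ¬ V 3 v := by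
  have h1 := ((bt_and F V w _ _).mp h).1
  have := (bt_imp F V w _ _).mp h1 hq
  obtain ⟨v, hv, hpv⟩ := (bt_dia F V w 1 _).mp this
  exact ⟨v, hv, ((bt_and F V v _ _).mp hpv).1, ((bt_and F V v _ _).mp hpv).2⟩

lemma gam_g2 (h : BTruth F V w gam) (hp : V 0 w) :
    ∀ v, F.R 0 w v → ¬ V 0 v ∧ ¬ V 1 v := by
  have h2 := ((bt_and F V w _ _).mp (((bt_and F V w _ _).mp h).2)).1
  intro v hv
  have := (bt_box F V w 0 _).mp ((bt_imp F V w _ _).mp h2 hp) v hv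
  exact ⟨((bt_and F V v _ _).mp this).1, ((bt_and F V v _ _).mp this).2⟩

lemma gam_g4 (h : BTruth F V w gam) (hq : V 1 w) :
    ∀ v, F.R 1 w v → ¬ V 1 v := by
  have h4 := ((bt_and F V w _ _).mp (((bt_and F V w _ _).mp
    (((bt_and F V w _ _).mp h).2)).2)).1
  intro v hv
  exact (bt_box F V w 1 _).mp ((bt_imp F V w _ _).mp h4 hq) v hv

lemma gam_g5 (h : BTruth F V w gam) (hp : V 0 w) :
    ∀ v, F.R 1 w v → ¬ V 0 v := by
  have h5 := ((bt_and F V w _ _).mp (((bt_and F V w _ _).mp (((bt_and F V w _ _).mp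
    (((bt_and F V w _ _).mp h).2)).2)).2)).1
  intro v hv
  exact (bt_box F V w 1 _).mp ((bt_imp F V w _ _).mp h5 hp) v hv

lemma gam_g7 (h : BTruth F V w gam) (hc : V 2 w) :
    ∃ v, F.R 1 w v ∧ (V 1 v ∨ (V 0 v ∧ V 3 v)) := by
  have h7 := ((bt_and F V w _ _).mp (((bt_and F V w _ _).mp (((bt_and F V w _ _).mp
    (((bt_and F V w _ _).mp (((bt_and F V w _ _).mp h).2)).2)).2)).2)).1
  obtain ⟨v, hv, hor⟩ := (bt_dia F V w 1 _).mp ((bt_imp F V w _ _).mp h7 hc)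
  refine ⟨v, hv, ?_⟩
  rcases (bt_or F V v _ _).mp hor with h' | h'
  · exact Or.inl h'
  · exact Or.inr ⟨((bt_and F V v _ _).mp h').1, ((bt_and F V v _ _).mp h').2⟩

lemma gam_g8 (h : BTruth F V w gam) (hp : V 0 w) :
    ∀ v, F.R 1 w v → (∃ z, F.R 0 v z ∧ V 2 z) → V 2 v := by
  have h8 := ((bt_and F V w _ _).mp (((bt_and F V w _ _).mp (((bt_and F V w _ _).mp
    (((bt_and F V w _ _).mp (((bt_and F V w _ _).mp
    (((bt_and F V w _ _).mp h).2)).2)).2)).2)).2)).1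
  intro v hv ⟨z, hz, hcz⟩
  have := (bt_box F V w 1 _).mp ((bt_imp F V w _ _).mp h8 hp) v hv
  exact (bt_imp F V v _ _).mp this ((bt_dia F V v 0 _).mpr ⟨z, hz, hcz⟩)

lemma gam_g9 (h : BTruth F V w gam) (hc : V 2 w) :
    ∃ v, F.R 1 w v ∧ V 0 v := by
  have h9 := ((bt_and F V w _ _).mp (((bt_and F V w _ _).mp (((bt_and F V w _ _).mp
    (((bt_and F V w _ _).mp (((bt_and F V w _ _).mp (((bt_and F V w _ _).mp
    (((bt_and F V w _ _).mp h).2)).2)).2)).2)).2)).2)).1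
  exact (bt_dia F V w 1 _).mp ((bt_imp F V w _ _).mp h9 hc)

lemma gam_g10 (h : BTruth F V w gam) (hp : V 0 w) (he : ¬ V 3 w) :
    ∃ y, F.R 0 w y ∧ ∃ v, F.R 1 y v ∧ V 2 v := by
  have hrest := (((bt_and F V w _ _).mp (((bt_and F V w _ _).mp (((bt_and F V w _ _).mp
    (((bt_and F V w _ _).mp (((bt_and F V w _ _).mp (((bt_and F V w _ _).mp
    (((bt_and F V w _ _).mp h).2)).2)).2)).2)).2)).2)).2)
  have h10 := ((bt_and F V w _ _).mp hrest).1
  have hpe : BTruth F V w (.and fP (.neg fE)) := (bt_and F V w _ _).mpr ⟨hp, he⟩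
  obtain ⟨y, hy, hdv⟩ := (bt_dia F V w 0 _).mp ((bt_imp F V w _ _).mp h10 hpe)
  obtain ⟨v, hv, hcv⟩ := (bt_dia F V y 1 _).mp hdv
  exact ⟨y, hy, v, hv, hcv⟩

lemma gam_g11 (h : BTruth F V w gam) :
    ¬ (V 0 w ∧ V 1 w) ∧ ¬ (V 0 w ∧ V 2 w) ∧ ¬ (V 1 w ∧ V 2 w) := by
  have hrest := (((bt_and F V w _ _).mp (((bt_and F V w _ _).mp (((bt_and F V w _ _).mp
    (((bt_and F V w _ _).mp (((bt_and F V w _ _).mp (((bt_and F V w _ _).mp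
    (((bt_and F V w _ _).mp h).2)).2)).2)).2)).2)).2)).2)
  have h11 := ((bt_and F V w _ _).mp hrest).2
  have ha := (bt_and F V w _ _).mp h11
  have hb := (bt_and F V w _ _).mp ha.2
  refine ⟨fun hx => ?_, fun hx => ?_, fun hx => ?_⟩
  · exact (bt_neg F V w _).mp ha.1 ((bt_and F V w _ _).mpr hx)
  · exact (bt_neg F V w _).mp hb.1 ((bt_and F V w _ _).mpr hx)
  · exact (bt_neg F V w _).mp hb.2 ((bt_and F V w _ _).mpr hx)

lemma covB_gam {n : ℕ} (h : BTruth F V w (covB (n+1))) : BTruth F V w gam :=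
  ((bt_and F V w _ _).mp h).1

lemma covB_box0 {n : ℕ} (h : BTruth F V w (covB (n+1))) :
    ∀ v, F.R 0 w v → BTruth F V v (covB n) := by
  intro v hv
  exact ((bt_and F V w _ _).mp (((bt_and F V w _ _).mp h).2)).1 v hv

lemma covB_box1 {n : ℕ} (h : BTruth F V w (covB (n+1))) :
    ∀ v, F.R 1 w v → BTruth F V v (covB n) := by
  intro v hv
  exact ((bt_and F V w _ _).mp (((bt_and F V w _ _).mp h).2)).2 v hv

lemma covB_gam' : ∀ {n : ℕ}, BTruth F V w (covB n) → BTruth F V w gam := by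
  intro n
  cases n with
  | zero => exact fun h => h
  | succ n => exact covB_gam

end GamFacts

lemma covB_mono {F : Frame2} {V : ℕ → F.W → Prop} :
    ∀ (n : ℕ) (w : F.W), BTruth F V w (covB (n+1)) → BTruth F V w (covB n) := by
  intro n
  induction n with
  | zero => intro w h; exact covB_gam h
  | succ n ih =>
      intro w h
      refine (bt_and F V w _ _).mpr ⟨covB_gam h, (bt_and F V w _ _).mpr ⟨?_, ?_⟩⟩
      · intro v hv; exact ih v (covB_box0 h v hv)
      · intro v hv; exact ih v (covB_box1 h v hv)

lemma covB_all {F : Frame2} {V : ℕ → F.W → Prop}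
    (h : ∀ w, BTruth F V w gam) : ∀ (n : ℕ) (w : F.W), BTruth F V w (covB n) := by
  intro n
  induction n with
  | zero => exact h
  | succ n ih =>
      intro w
      exact (bt_and F V w _ _).mpr ⟨h w, (bt_and F V w _ _).mpr
        ⟨fun v _ => ih v, fun v _ => ih v⟩⟩

/-! ### psi extraction -/

section PsiFacts

variable {F : Frame2} {V : ℕ → F.W → Prop} {r : F.W}

lemma psi_cov (h : BTruth F V r psi) : BTruth F V r (covB 5) :=
  ((bt_and F V r _ _).mp h).1

lemma psi_step (h : BTruth F V r psi) :
    ∀ u, F.R 1 r u → (∃ x, F.R 0 u x ∧ V 0 x) → ∃ w', F.R 0 u w' ∧ V 1 w' := by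
  intro u hu hx
  have h2 := ((bt_and F V r _ _).mp (((bt_and F V r _ _).mp h).2)).1
  have := (bt_box F V r 1 _).mp h2 u hu
  have hd : BTruth F V u (.dia 0 fP) := (bt_dia F V u 0 _).mpr
    ⟨hx.choose, hx.choose_spec.1, hx.choose_spec.2⟩
  obtain ⟨w', hw', hqw'⟩ := (bt_dia F V u 0 _).mp ((bt_imp F V u _ _).mp this hd)
  exact ⟨w', hw', hqw'⟩

lemma psi_nop (h : BTruth F V r psi) : ∀ v, F.R 0 r v → ¬ V 0 v := by
  intro v hv
  have h3 := ((bt_and F V r _ _).mp (((bt_and F V r _ _).mp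
    (((bt_and F V r _ _).mp h).2)).2)).1
  exact (bt_neg F V v _).mp ((bt_box F V r 0 _).mp h3 v hv)

lemma psi_start (h : BTruth F V r psi) :
    ∃ z, F.R 0 r z ∧ V 2 z ∧ ∃ x, F.R 1 z x ∧ V 0 x ∧ V 3 x := by
  have h4 := ((bt_and F V r _ _).mp (((bt_and F V r _ _).mp
    (((bt_and F V r _ _).mp h).2)).2)).2
  obtain ⟨z, hz, hcz⟩ := (bt_dia F V r 0 _).mp h4
  obtain ⟨hc, hd⟩ := (bt_and F V z _ _).mp hcz
  obtain ⟨x, hx, hpe⟩ := (bt_dia F V z 1 _).mp hd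
  exact ⟨z, hz, hc, x, hx, ((bt_and F V x _ _).mp hpe).1, ((bt_and F V x _ _).mp hpe).2⟩

end PsiFacts
/-! ### Unimodal axioms and correspondence -/

def wcax : UForm :=
  uOr (.box (.imp (uAnd (.var 0) (.box (.var 0))) (.var 1)))
      (.box (.imp (uAnd (.var 1) (.box (.var 1))) (.var 0)))

def ax4m : UForm := .imp (uAnd (.var 0) (.box (.var 0))) (.box (.box (.var 0)))

lemma wcax_mem_K3 : wcax ∈ LogicK3 := by
  intro F hF V w
  by_cases hE : ∃ y, F.R w y ∧ V 0 y ∧ (∀ v, F.R y v → V 0 v) ∧ ¬ V 1 y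
  · apply (ut_or F V w _ _).mpr
    right
    intro z hz hant
    obtain ⟨h1, hb1⟩ := (ut_and F V z _ _).mp hant
    obtain ⟨y, hy, h0, hb0, hq⟩ := hE
    by_contra hp
    rcases hF w y z hy hz with h | h | h
    · exact hp (h ▸ h0)
    · exact hp (hb0 z h)
    · exact hq (hb1 y h)
  · apply (ut_or F V w _ _).mpr
    left
    intro y hy hant
    obtain ⟨h0, hb⟩ := (ut_and F V y _ _).mp hant
    by_contra hq
    exact hE ⟨y, hy, h0, hb, hq⟩

lemma ax4m_mem_K4m : ax4m ∈ LogicK4minus := by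
  intro F hF V w hant y hy z hz
  obtain ⟨h0, hb⟩ := (ut_and F V w _ _).mp hant
  rcases hF w y z hy hz with h | h
  · exact h ▸ h0
  · exact hb z h

lemma ax4m_mem_Diff : ax4m ∈ LogicDiff := by
  intro F hF V w hant y hy z hz
  obtain ⟨h0, hb⟩ := (ut_and F V w _ _).mp hant
  by_cases h : w = z
  · exact h ▸ h0
  · exact hb z ((hF w z).mpr h)

section Correspondence

variable {F : Frame2}

lemma wc_of_valid (h : BValid F (UForm.embed 0 wcax)) : WeaklyConnected (F.R 0) := by
  intro x y z hxy hxz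
  by_contra hcon
  push_neg at hcon
  obtain ⟨hne, hnyz, hnzy⟩ := hcon
  have hu := (embed_truth F 0 (fun n v => match n with | 0 => v ≠ z | _ => v ≠ y) wcax x).mp
    (h _ x)
  unfold wcax at hu
  rcases (ut_or (frSlice F 0)
      (fun n v => match n with | 0 => v ≠ z | _ => v ≠ y) x _ _).mp hu with hl | hr
  · have hant : UTruth (frSlice F 0) (fun n v => match n with | 0 => v ≠ z | _ => v ≠ y) y
        (uAnd (.var 0) (.box (.var 0))) :=
      (ut_and _ _ _ _ _).mpr ⟨hne, fun v hv => fun hveq => hnyz (hveq ▸ hv)⟩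
    exact (hl y hxy hant) rfl
  · have hant : UTruth (frSlice F 0) (fun n v => match n with | 0 => v ≠ z | _ => v ≠ y) z
        (uAnd (.var 1) (.box (.var 1))) :=
      (ut_and _ _ _ _ _).mpr ⟨Ne.symm hne, fun v hv => fun hveq => hnzy (hveq ▸ hv)⟩
    exact (hr z hxz hant) rfl

lemma pt_of_valid (h : BValid F (UForm.embed 1 ax4m)) : PseudoTransitive (F.R 1) := by
  intro x y z hxy hyz
  have hu := (embed_truth F 1
    (fun n v => match n with | 0 => x = v ∨ F.R 1 x v | _ => True) ax4m x).mp (h _ x)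
  unfold ax4m at hu
  have hant : UTruth (frSlice F 1)
      (fun n v => match n with | 0 => x = v ∨ F.R 1 x v | _ => True) x
      (uAnd (.var 0) (.box (.var 0))) :=
    (ut_and _ _ _ _ _).mpr ⟨Or.inl rfl, fun v hv => Or.inr hv⟩
  exact hu hant y hxy z hyz

lemma lcom_of_valid (h : BValid F lcomAx) : Lcom F := by
  intro x y z hxy hyz
  have := h (fun n v => match n with | 0 => ∃ u, F.R 1 x u ∧ F.R 0 u v | _ => True) x
  unfold lcomAx at this
  have hant : BTruth F (fun n v => match n with
      | 0 => ∃ u, F.R 1 x u ∧ F.R 0 u v | _ => True) x (.box 1 (.box 0 (.var 0))) :=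
    fun u hu v hv => ⟨u, hu, hv⟩
  exact this hant y hxy z hyz

lemma lcom_valid (hlc : Lcom F) : BValid F lcomAx := by
  intro V x h1 y hxy z hyz
  obtain ⟨u, hu1, hu2⟩ := hlc x y z hxy hyz
  exact h1 u hu1 z hu2

end Correspondence

/-! ### The product frame -/

instance : LinearOrder omegaSuccGt.W := inferInstanceAs (LinearOrder (WithTop ℕ))
instance : Top omegaSuccGt.W := inferInstanceAs (Top (WithTop ℕ))

def PF : Frame2 := prodFrame omegaSuccGt omegaNeq

lemma PR0 (x y : PF.W) : PF.R 0 x y ↔ y.1 < x.1 ∧ x.2 = y.2 := by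
  show (if (0 : Fin 2) = 0 then omegaSuccGt.R x.1 y.1 ∧ x.2 = y.2
    else omegaNeq.R x.2 y.2 ∧ x.1 = y.1) ↔ _
  rw [if_pos rfl]
  exact Iff.rfl

lemma PR1 (x y : PF.W) : PF.R 1 x y ↔ x.2 ≠ y.2 ∧ x.1 = y.1 := by
  show (if (1 : Fin 2) = 0 then omegaSuccGt.R x.1 y.1 ∧ x.2 = y.2
    else omegaNeq.R x.2 y.2 ∧ x.1 = y.1) ↔ _
  rw [if_neg (by decide)]
  exact Iff.rfl

lemma PF_wc : WeaklyConnected (PF.R 0) := by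
  intro x y z hxy hxz
  rw [PR0] at hxy hxz
  rcases lt_trichotomy y.1 z.1 with h | h | h
  · exact Or.inr (Or.inr ((PR0 z y).mpr ⟨h, hxz.2.symm.trans hxy.2⟩))
  · exact Or.inl (Prod.ext h (hxy.2.symm.trans hxz.2))
  · exact Or.inr (Or.inl ((PR0 y z).mpr ⟨h, hxy.2.symm.trans hxz.2⟩))

lemma PF_pt : PseudoTransitive (PF.R 1) := by
  intro x y z hxy hyz
  rw [PR1] at hxy hyz
  by_cases h : x = z
  · exact Or.inl h
  · refine Or.inr ((PR1 x z).mpr ⟨?_, hxy.2.trans hyz.2⟩)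
    intro h2
    exact h (Prod.ext (hxy.2.trans hyz.2) h2)

lemma PF_lcom : Lcom PF := by
  intro x y z hxy hyz
  rw [PR0] at hxy
  rw [PR1] at hyz
  refine ⟨(x.1, z.2), (PR1 _ _).mpr ⟨?_, rfl⟩, (PR0 _ _).mpr ⟨?_, rfl⟩⟩
  · exact hxy.2 ▸ hyz.1
  · exact hyz.2 ▸ hxy.1

lemma row_truth : ∀ (φ : UForm) (V : ℕ → PF.W → Prop) (w : PF.W),
    UTruth (frSlice PF 1) V w φ ↔ UTruth omegaNeq (fun n m => V n (w.1, m)) w.2 φ := by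
  intro φ
  induction φ with
  | var n =>
      intro V w
      exact iff_of_eq (congrArg (V n) (Prod.mk.eta (p := w)).symm)
  | bot => intro V w; exact Iff.rfl
  | imp s t ihs iht =>
      intro V w
      exact imp_congr (ihs V w) (iht V w)
  | box s ih =>
      intro V w
      constructor
      · intro h m hm
        exact (ih V (w.1, m)).mp (h (w.1, m) ((PR1 w (w.1, m)).mpr ⟨hm, rfl⟩))
      · intro h v hv
        have hv' := (PR1 w v).mp hv
        have h2 := h v.2 hv'.1
        refine (ih V v).mpr ?_
        rw [← hv'.2]
        exact h2

lemma K3_valid_PF : ∀ φu ∈ LogicK3, BValid PF (UForm.embed 0 φu) := by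
  intro φu hφ
  exact embed_valid PF 0 φu (hφ (frSlice PF 0) PF_wc)

lemma K4m_valid_PF : ∀ φu ∈ LogicK4minus, BValid PF (UForm.embed 1 φu) := by
  intro φu hφ
  exact embed_valid PF 1 φu (hφ (frSlice PF 1) PF_pt)

lemma Diff_valid_PF : ∀ φu ∈ LogicDiff, BValid PF (UForm.embed 1 φu) := by
  intro φu hφ V w
  apply (embed_truth PF 1 V φu w).mpr
  apply (row_truth φu V w).mpr
  exact hφ omegaNeq (fun x y => Iff.rfl) _ w.2
/-! ### The countermodel on the product frame -/

instance (n : ℕ) : OfNat omegaNeq.W n := inferInstanceAs (OfNat ℕ n)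
instance : Add omegaNeq.W := inferInstanceAs (Add ℕ)

abbrev PW : Type := WithTop ℕ × ℕ

abbrev ct (n : ℕ) : WithTop ℕ := WithTop.some n

lemma PR0' (x y : PW) : PF.R 0 x y ↔ y.1 < x.1 ∧ x.2 = y.2 := PR0 x y

lemma PR1' (x y : PW) : PF.R 1 x y ↔ x.2 ≠ y.2 ∧ x.1 = y.1 := PR1 x y

def VP : ℕ → PW → Prop
  | 0 => fun w => ∃ n : ℕ, w.1 = ct n ∧ w.2 = n + 1
  | 1 => fun w => ∃ n : ℕ, 1 ≤ n ∧ w.1 = ct n ∧ w.2 = n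
  | 2 => fun w => (∃ n : ℕ, w.1 = ct n) ∧ w.2 = 0
  | 3 => fun w => w.1 = ct 0 ∧ w.2 = 1
  | _ => fun _ => False

lemma ct_lt_ct {m n : ℕ} : ct m < ct n ↔ m < n := WithTop.coe_lt_coe

lemma ct_inj {m n : ℕ} (h : ct m = ct n) : m = n := by simpa using h

lemma gamP : ∀ w : PW, BTruth PF VP w gam := by
  intro w
  have hg1 : BTruth PF VP w g1 := by
    refine (bt_imp PF VP w _ _).mpr ?_
    intro hq
    obtain ⟨n, h1n, ha, hb⟩ := (bt_var PF VP w 1).mp hq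
    refine (bt_dia PF VP w 1 _).mpr ⟨((w.1, n + 1) : PW),
      (PR1' _ _).mpr ⟨show w.2 ≠ n + 1 by omega, rfl⟩, ?_⟩
    refine (bt_and PF VP _ _ _).mpr ⟨⟨n, ha, rfl⟩, ?_⟩
    intro hE
    obtain ⟨hE1, hE2⟩ := hE
    have h2 : (n : ℕ) + 1 = 1 := hE2
    omega
  have hg2 : BTruth PF VP w g2 := by
    refine (bt_imp PF VP w _ _).mpr ?_
    intro hp
    obtain ⟨n, ha, hb⟩ := (bt_var PF VP w 0).mp hp
    refine (bt_box PF VP w 0 _).mpr ?_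
    intro v hv
    obtain ⟨hlt, heq⟩ := (PR0' w v).mp hv
    refine (bt_and PF VP v _ _).mpr ⟨?_, ?_⟩
    · intro hP
      obtain ⟨m, hm1, hm2⟩ := hP
      rw [hm1, ha] at hlt
      have h1 := ct_lt_ct.mp hlt
      omega
    · intro hQ
      obtain ⟨m, hm0, hm1, hm2⟩ := hQ
      rw [hm1, ha] at hlt
      have h1 := ct_lt_ct.mp hlt
      omega
  have hg4 : BTruth PF VP w g4 := by
    refine (bt_imp PF VP w _ _).mpr ?_
    intro hq
    obtain ⟨n, h1n, ha, hb⟩ := (bt_var PF VP w 1).mp hq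
    refine (bt_box PF VP w 1 _).mpr ?_
    intro v hv
    obtain ⟨hne, heq⟩ := (PR1' w v).mp hv
    intro hQ
    obtain ⟨m, hm0, hm1, hm2⟩ := hQ
    have hnm : n = m := ct_inj ((ha.symm.trans heq).trans hm1)
    exact hne (by omega)
  have hg5 : BTruth PF VP w g5 := by
    refine (bt_imp PF VP w _ _).mpr ?_
    intro hp
    obtain ⟨n, ha, hb⟩ := (bt_var PF VP w 0).mp hp
    refine (bt_box PF VP w 1 _).mpr ?_
    intro v hv
    obtain ⟨hne, heq⟩ := (PR1' w v).mp hv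
    intro hP
    obtain ⟨m, hm1, hm2⟩ := hP
    have hnm : n = m := ct_inj ((ha.symm.trans heq).trans hm1)
    exact hne (by omega)
  have hg7 : BTruth PF VP w g7 := by
    refine (bt_imp PF VP w _ _).mpr ?_
    intro hc
    obtain ⟨⟨n, ha⟩, hb⟩ := (bt_var PF VP w 2).mp hc
    cases n with
    | zero =>
        refine (bt_dia PF VP w 1 _).mpr ⟨((w.1, 1) : PW),
          (PR1' _ _).mpr ⟨show w.2 ≠ 1 by omega, rfl⟩, ?_⟩
        exact (bt_or PF VP _ _ _).mpr (Or.inr ((bt_and PF VP _ _ _).mpr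
          ⟨⟨0, ha, rfl⟩, ha, rfl⟩))
    | succ m =>
        refine (bt_dia PF VP w 1 _).mpr ⟨((w.1, m + 1) : PW),
          (PR1' _ _).mpr ⟨show w.2 ≠ m + 1 by omega, rfl⟩, ?_⟩
        exact (bt_or PF VP _ _ _).mpr (Or.inl ⟨m + 1, by omega, ha, rfl⟩)
  have hg8 : BTruth PF VP w g8 := by
    refine (bt_imp PF VP w _ _).mpr ?_
    intro hp
    obtain ⟨n, ha, hb⟩ := (bt_var PF VP w 0).mp hp
    refine (bt_box PF VP w 1 _).mpr ?_
    intro v hv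
    obtain ⟨hne, heq⟩ := (PR1' w v).mp hv
    refine (bt_imp PF VP v _ _).mpr ?_
    intro hdc
    obtain ⟨z, hz, hcz⟩ := (bt_dia PF VP v 0 _).mp hdc
    obtain ⟨hlt, hzeq⟩ := (PR0' v z).mp hz
    obtain ⟨⟨k, hk⟩, hz0⟩ := (bt_var PF VP z 2).mp hcz
    exact (bt_var PF VP v 2).mpr ⟨⟨n, heq ▸ ha⟩, by omega⟩
  have hg9 : BTruth PF VP w g9 := by
    refine (bt_imp PF VP w _ _).mpr ?_
    intro hc
    obtain ⟨⟨n, ha⟩, hb⟩ := (bt_var PF VP w 2).mp hc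
    refine (bt_dia PF VP w 1 _).mpr ⟨((w.1, n + 1) : PW),
      (PR1' _ _).mpr ⟨show w.2 ≠ n + 1 by omega, rfl⟩, ?_⟩
    exact ⟨n, ha, rfl⟩
  have hg10 : BTruth PF VP w g10 := by
    refine (bt_imp PF VP w _ _).mpr ?_
    intro hpe
    obtain ⟨hp, hne⟩ := (bt_and PF VP w _ _).mp hpe
    obtain ⟨n, ha, hb⟩ := (bt_var PF VP w 0).mp hp
    have hn1 : 1 ≤ n := by
      by_contra hn
      have hn0 : n = 0 := by omega
      exact (bt_neg PF VP w _).mp hne ((bt_var PF VP w 3).mpr ⟨hn0 ▸ ha, by omega⟩)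
    refine (bt_dia PF VP w 0 _).mpr ⟨((ct 0, w.2) : PW), (PR0' _ _).mpr ⟨?_, rfl⟩, ?_⟩
    · rw [ha]
      exact ct_lt_ct.mpr (by omega)
    · refine (bt_dia PF VP _ 1 _).mpr ⟨((ct 0, 0) : PW),
        (PR1' _ _).mpr ⟨show w.2 ≠ 0 by omega, rfl⟩, ?_⟩
      exact (bt_var PF VP _ 2).mpr ⟨⟨0, rfl⟩, rfl⟩
  have hg11 : BTruth PF VP w g11 := by
    refine (bt_and PF VP w _ _).mpr ⟨?_, (bt_and PF VP w _ _).mpr ⟨?_, ?_⟩⟩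
    · refine (bt_neg PF VP w _).mpr ?_
      intro h
      obtain ⟨h0, h1⟩ := (bt_and PF VP w _ _).mp h
      obtain ⟨n, ha, hb⟩ := (bt_var PF VP w 0).mp h0
      obtain ⟨m, hm, ha', hb'⟩ := (bt_var PF VP w 1).mp h1
      have hnm : n = m := ct_inj (ha.symm.trans ha')
      omega
    · refine (bt_neg PF VP w _).mpr ?_
      intro h
      obtain ⟨h0, h2⟩ := (bt_and PF VP w _ _).mp h
      obtain ⟨n, ha, hb⟩ := (bt_var PF VP w 0).mp h0
      obtain ⟨_, hb'⟩ := (bt_var PF VP w 2).mp h2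
      omega
    · refine (bt_neg PF VP w _).mpr ?_
      intro h
      obtain ⟨h1, h2⟩ := (bt_and PF VP w _ _).mp h
      obtain ⟨m, hm, ha, hb⟩ := (bt_var PF VP w 1).mp h1
      obtain ⟨_, hb'⟩ := (bt_var PF VP w 2).mp h2
      omega
  exact (bt_and PF VP w _ _).mpr ⟨hg1, (bt_and PF VP w _ _).mpr ⟨hg2,
    (bt_and PF VP w _ _).mpr ⟨hg4, (bt_and PF VP w _ _).mpr ⟨hg5,
    (bt_and PF VP w _ _).mpr ⟨hg7, (bt_and PF VP w _ _).mpr ⟨hg8,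
    (bt_and PF VP w _ _).mpr ⟨hg9, (bt_and PF VP w _ _).mpr ⟨hg10, hg11⟩⟩⟩⟩⟩⟩⟩⟩

def rP : PW := ((⊤ : WithTop ℕ), 0)

lemma psiP : BTruth PF VP rP psi := by
  refine (bt_and PF VP rP _ _).mpr ⟨covB_all (F := PF) (V := VP) gamP 5 rP,
    (bt_and PF VP rP _ _).mpr ⟨?conj2, (bt_and PF VP rP _ _).mpr ⟨?conj3, ?conj4⟩⟩⟩
  case conj2 =>
    refine (bt_box PF VP rP 1 _).mpr ?_
    intro u hu
    obtain ⟨hne, heq⟩ := (PR1' rP u).mp hu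
    refine (bt_imp PF VP u _ _).mpr ?_
    intro _
    refine (bt_dia PF VP u 0 _).mpr ⟨((ct u.2, u.2) : PW), (PR0' _ _).mpr ⟨?_, rfl⟩, ?_⟩
    · rw [← heq]
      exact WithTop.coe_lt_top _
    · refine (bt_var PF VP _ 1).mpr ⟨u.2, ?_, rfl, rfl⟩
      have h0 : (0 : ℕ) ≠ u.2 := hne
      omega
  case conj3 =>
    refine (bt_box PF VP rP 0 _).mpr ?_
    intro v hv
    obtain ⟨hlt, heq⟩ := (PR0' rP v).mp hv
    refine (bt_neg PF VP v _).mpr ?_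
    intro hP
    obtain ⟨m, hm1, hm2⟩ := hP
    have h0 : (0 : ℕ) = v.2 := heq
    omega
  case conj4 =>
    refine (bt_dia PF VP rP 0 _).mpr ⟨((ct 0, 0) : PW), (PR0' _ _).mpr
      ⟨WithTop.coe_lt_top _, rfl⟩, ?_⟩
    refine (bt_and PF VP _ _ _).mpr ⟨(bt_var PF VP _ 2).mpr ⟨⟨0, rfl⟩, rfl⟩, ?_⟩
    refine (bt_dia PF VP _ 1 _).mpr ⟨((ct 0, 1) : PW), (PR1' _ _).mpr
      ⟨show (0:ℕ) ≠ 1 by omega, rfl⟩, ?_⟩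
    exact (bt_and PF VP _ _ _).mpr ⟨⟨0, rfl, rfl⟩, rfl, rfl⟩
/-! ### The combinatorial core: no finite frame satisfies psi -/

structure Stg (F : Frame2) (V : ℕ → F.W → Prop) (r : F.W) where
  x : F.W
  u : F.W
  w : F.W
  hru : F.R 1 r u
  hux : F.R 0 u x
  huw : F.R 0 u w
  hwx : F.R 0 w x
  hp : V 0 x
  hq : V 1 w
  hBw : BTruth F V w (covB 3)
  hBx : BTruth F V x (covB 2)

def Row (F : Frame2) (V : ℕ → F.W → Prop) (x : F.W) : Prop :=
  ∃ z, F.R 1 x z ∧ F.R 1 z x ∧ V 2 z ∧ BTruth F V z gam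

def Nxt (F : Frame2) (V : ℕ → F.W → Prop) (r : F.W) (s t : Stg F V r) : Prop :=
  F.R 1 s.w t.x ∧ ¬ V 3 t.x ∧ Row F V t.x

def Hyps (F : Frame2) (V : ℕ → F.W → Prop) (r : F.W) : Prop :=
  WeaklyConnected (F.R 0) ∧ PseudoTransitive (F.R 1) ∧ Lcom F ∧ BTruth F V r psi

section Core

variable {F : Frame2} {V : ℕ → F.W → Prop} {r : F.W}

lemma build_from (H : Hyps F V r) {c0 c1 x : F.W} (hrv : F.R 1 r c0 ∨ c0 = r)
    (h01 : F.R 0 c0 c1) (h1x : F.R 1 c1 x) (hp : V 0 x)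
    (hBx : BTruth F V x (covB 2)) : ∃ s : Stg F V r, s.x = x := by
  obtain ⟨hwc, hpt, hlc, hpsi⟩ := H
  obtain ⟨u, hcu, hux⟩ := hlc c0 c1 x h01 h1x
  have hur : u ≠ r := by
    intro he
    exact psi_nop hpsi x (he ▸ hux) hp
  have hru : F.R 1 r u := by
    rcases hrv with h | h
    · rcases hpt r c0 u h hcu with he | h2
      · exact absurd he.symm hur
      · exact h2
    · rw [← h]; exact hcu
  obtain ⟨w, huw, hqw⟩ := psi_step hpsi u hru ⟨x, hux, hp⟩
  have hBu : BTruth F V u (covB 4) := covB_box1 (psi_cov hpsi) u hru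
  have hBw : BTruth F V w (covB 3) := covB_box0 hBu w huw
  have hgx : BTruth F V x gam := covB_gam' hBx
  have hxw : x ≠ w := by
    intro he
    exact (gam_g11 hgx).1 ⟨hp, he ▸ hqw⟩
  have hwx : F.R 0 w x := by
    rcases hwc u x w hux huw with he | h | h
    · exact absurd he hxw
    · exact absurd hqw (gam_g2 hgx hp w h).2
    · exact h
  exact ⟨⟨x, u, w, hru, hux, huw, hwx, hp, hqw, hBw, hBx⟩, rfl⟩

lemma stage0 (H : Hyps F V r) : ∃ s : Stg F V r, V 3 s.x := by
  obtain ⟨z, hrz, hcz, x0, hzx, hpx, hex⟩ := psi_start H.2.2.2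
  have hBz : BTruth F V z (covB 4) := covB_box0 (psi_cov H.2.2.2) z hrz
  have hBx0 : BTruth F V x0 (covB 3) := covB_box1 hBz x0 hzx
  obtain ⟨s, hsx⟩ := build_from H (Or.inr rfl) hrz hzx hpx (covB_mono 2 x0 hBx0)
  refine ⟨s, ?_⟩
  rw [hsx]
  exact hex

lemma step (H : Hyps F V r) (s : Stg F V r) : ∃ t : Stg F V r, Nxt F V r s t := by
  have hgw : BTruth F V s.w gam := covB_gam' s.hBw
  obtain ⟨x', hwx', hpx', hex'⟩ := gam_g1 hgw s.hq
  have hBx' : BTruth F V x' (covB 2) := covB_box1 s.hBw x' hwx'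
  obtain ⟨t, htx⟩ := build_from H (Or.inl s.hru) s.huw hwx' hpx' hBx'
  have hgx' : BTruth F V x' gam := covB_gam' hBx'
  have hrow : Row F V x' := by
    obtain ⟨y, hxy, v, hyv, hcv⟩ := gam_g10 hgx' hpx' hex'
    obtain ⟨h, hx'h, hhv⟩ := H.2.2.1 x' y v hxy hyv
    have hch : V 2 h := gam_g8 hgx' hpx' h hx'h ⟨v, hhv, hcv⟩
    have hBh : BTruth F V h (covB 1) := covB_box1 hBx' h hx'h
    have hgh : BTruth F V h gam := covB_gam' hBh
    obtain ⟨pp, hhp, hpp⟩ := gam_g9 hgh hch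
    have hhx' : F.R 1 h x' := by
      rcases H.2.1 x' h pp hx'h hhp with he | hrel
      · rw [he]; exact hhp
      · exact absurd hpp (gam_g5 hgx' hpx' pp hrel)
    exact ⟨h, hx'h, hhx', hch, hgh⟩
  refine ⟨t, ?_, ?_, ?_⟩
  · rw [htx]; exact hwx'
  · rw [htx]; exact hex'
  · rw [htx]; exact hrow

lemma descent (H : Hyps F V r) {s s' t t' : Stg F V r} (hs : Nxt F V r s s')
    (ht : Nxt F V r t t') (he : s'.x = t'.x) : s.x = t.x := by
  obtain ⟨hwc, hpt, hlc, hpsi⟩ := H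
  obtain ⟨hws, -, -⟩ := hs
  obtain ⟨hwt, hsnotE, z, hxz, hzx, hcz, hgz⟩ := ht
  rw [he] at hws
  have hgsw : BTruth F V s.w gam := covB_gam' s.hBw
  have hgtw : BTruth F V t.w gam := covB_gam' t.hBw
  have hgtx : BTruth F V t'.x gam := covB_gam' t'.hBx
  have h1 : F.R 1 s.w z := by
    rcases hpt s.w t'.x z hws hxz with hEq | h
    · exfalso
      refine (gam_g11 hgz).2.2 ⟨?_, hcz⟩
      rw [← hEq]; exact s.hq
    · exact h
  obtain ⟨mt, hzmt, hmt⟩ := gam_g7 hgz hcz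
  have hxmt : F.R 1 t'.x mt ∧ V 1 mt := by
    rcases hpt t'.x z mt hxz hzmt with hEq | hx
    · exfalso
      rcases hmt with hq' | ⟨hp', he'⟩
      · exact (gam_g11 hgtx).1 ⟨t'.hp, by rw [hEq]; exact hq'⟩
      · exact hsnotE (by rw [hEq]; exact he')
    · rcases hmt with hq' | ⟨hp', he'⟩
      · exact ⟨hx, hq'⟩
      · exact absurd hp' (gam_g5 hgtx t'.hp mt hx)
  obtain ⟨hxq, hq1⟩ := hxmt
  have h4 : mt = t.w := by
    rcases hpt t.w t'.x mt hwt hxq with hEq | hx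
    · exact hEq.symm
    · exact absurd hq1 (gam_g4 hgtw t.hq mt hx)
  have h5 : s.w = t.w := by
    rcases hpt s.w z t.w h1 (h4 ▸ hzmt) with hEq | hx
    · exact hEq
    · exact absurd t.hq (gam_g4 hgsw s.hq t.w hx)
  have hwtx : F.R 0 s.w t.x := by rw [h5]; exact t.hwx
  rcases hwc s.w s.x t.x s.hwx hwtx with hEq | h | h
  · exact hEq
  · exact absurd t.hp (gam_g2 (covB_gam' s.hBx) s.hp t.x h).1
  · exact absurd s.hp (gam_g2 (covB_gam' t.hBx) t.hp s.x h).1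

lemma core (H : Hyps F V r) (hfin : Finite F.W) : False := by
  haveI := hfin
  obtain ⟨s0, hs0e⟩ := stage0 H
  have hstep : ∀ s : Stg F V r, ∃ t : Stg F V r, Nxt F V r s t := fun s => step H s
  let seq : ℕ → Stg F V r := fun n => Nat.rec s0 (fun _ s => (hstep s).choose) n
  have hseq : ∀ n, Nxt F V r (seq n) (seq (n + 1)) :=
    fun n => (hstep (seq n)).choose_spec
  have hdist : ∀ d m : ℕ, (seq m).x ≠ (seq (m + d + 1)).x := by
    intro d m
    induction m with
    | zero =>
        intro he
        have h0 : (0 : ℕ) + d + 1 = d + 1 := by omega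
        rw [h0] at he
        exact (hseq d).2.1 (by rw [← he]; exact hs0e)
    | succ m ih =>
        have harith : m + 1 + d + 1 = (m + d + 1) + 1 := by omega
        rw [harith]
        intro he
        exact ih (descent H (hseq m) (hseq (m + d + 1)) he)
  obtain ⟨a, b, hab, he⟩ := Finite.exists_ne_map_eq_of_infinite (fun n => (seq n).x)
  rcases Nat.lt_or_ge a b with h | h
  · obtain ⟨d, hd⟩ : ∃ d, b = a + d + 1 := ⟨b - a - 1, by omega⟩
    exact hdist d a (by rw [← hd]; exact he)
  · have h' : b < a := by omega
    obtain ⟨d, hd⟩ : ∃ d, a = b + d + 1 := ⟨a - b - 1, by omega⟩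
    exact hdist d b (by rw [← hd]; exact he.symm)

end Core

/-! ### Assembly -/

lemma no_fmp_general (L : Set BForm)
    (hvalidP : ∀ φ ∈ L, BValid PF φ)
    (hwcL : UForm.embed 0 wcax ∈ L)
    (hptL : UForm.embed 1 ax4m ∈ L)
    (hlcL : lcomAx ∈ L) : ¬ HasFMP L := by
  intro h
  have hphiL : phi ∉ L := by
    intro hmem
    exact (hvalidP phi hmem VP rP) psiP
  obtain ⟨F, hfin, hFr, V, w, hnt⟩ := h phi hphiL
  have hps : BTruth F V w psi := by
    by_contra hc
    exact hnt (fun hp => absurd hp hc)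
  exact core ⟨wc_of_valid (hFr _ hwcL), pt_of_valid (hFr _ hptL),
    lcom_of_valid (hFr _ hlcL), hps⟩ hfin
lemma comm_valid_K4m : ∀ φ ∈ CommutatorLcom LogicK3 LogicK4minus, BValid PF φ := by
  intro φ hφ
  refine smallest_sub (isLogic_validSet PF) ?_ hφ
  intro χ hχ
  rcases hχ with (h | h) | h
  · obtain ⟨ψu, hm, rfl⟩ := h
    exact K3_valid_PF ψu hm
  · obtain ⟨ψu, hm, rfl⟩ := h
    exact K4m_valid_PF ψu hm
  · rw [Set.mem_singleton_iff] at h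
    subst h
    exact lcom_valid PF_lcom

lemma comm_valid_Diff : ∀ φ ∈ CommutatorLcom LogicK3 LogicDiff, BValid PF φ := by
  intro φ hφ
  refine smallest_sub (isLogic_validSet PF) ?_ hφ
  intro χ hχ
  rcases hχ with (h | h) | h
  · obtain ⟨ψu, hm, rfl⟩ := h
    exact K3_valid_PF ψu hm
  · obtain ⟨ψu, hm, rfl⟩ := h
    exact Diff_valid_PF ψu hm
  · rw [Set.mem_singleton_iff] at h
    subst h
    exact lcom_valid PF_lcom

/-- **Corollary.** Neither `[K3, K4⁻]^lcom` nor `[K3, Diff]^lcom` has the finite model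
property. -/
theorem no_fmp_K3_K4minus_lcom_and_K3_Diff_lcom :
    ¬ HasFMP (CommutatorLcom LogicK3 LogicK4minus) ∧
    ¬ HasFMP (CommutatorLcom LogicK3 LogicDiff) := by
  constructor
  · exact no_fmp_general _ comm_valid_K4m
      (mem_smallest (Set.mem_union_left _ (Set.mem_union_left _ ⟨wcax, wcax_mem_K3, rfl⟩)))
      (mem_smallest (Set.mem_union_left _ (Set.mem_union_right _ ⟨ax4m, ax4m_mem_K4m, rfl⟩)))
      (mem_smallest (Set.mem_union_right _ rfl))
  · exact no_fmp_general _ comm_valid_Diff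
      (mem_smallest (Set.mem_union_left _ (Set.mem_union_left _ ⟨wcax, wcax_mem_K3, rfl⟩)))
      (mem_smallest (Set.mem_union_left _ (Set.mem_union_right _ ⟨ax4m, ax4m_mem_Diff, rfl⟩)))
      (mem_smallest (Set.mem_union_right _ rfl))
end

section
/- Let F = (W,R0,R1) be any 2-frame such that R0 is weakly connected, and R0, R1 are confluent and commute (i.e., (lcom), (rcom) and (conf) hold). If the formula φ∞ is satisfiable in F (i.e., φ∞ holds at some point of some model based on F), then W is infinite. -/
set_option linter.unusedVariables false

/-! ### The formula `φ∞` -/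

/-- The propositional variable `p`. -/
def pV : BForm := .var 0

/-- The formula `φ∞`: the conjunction of
`◇1◇0(p ∧ □0⊥)`,
`□1(◇0 p → ◇0(◇0 p ∧ □0□0¬p))`, and
`□0(◇1(◇0 p ∧ □0□0¬p) → ◇1(p ∧ □0¬p ∧ □0□0¬p))`. -/
def phiInf : BForm :=
  .and (.dia 1 (.dia 0 (.and pV (.box 0 .bot))))
    (.and
      (.box 1 (.imp (.dia 0 pV)
        (.dia 0 (.and (.dia 0 pV) (.box 0 (.box 0 (.neg pV)))))))
      (.box 0 (.imp
        (.dia 1 (.and (.dia 0 pV) (.box 0 (.box 0 (.neg pV)))))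
        (.dia 1 (.and pV (.and (.box 0 (.neg pV)) (.box 0 (.box 0 (.neg pV)))))))))


/-! ### Auxiliary machinery for Lemma 1 -/

/-- `BadRel R k z` : every `R`-path starting at `z` has length at most `k`. -/
def BadRel {W : Type} (R : W → W → Prop) : ℕ → W → Prop
  | 0, z => ∀ y, ¬ R z y
  | k+1, z => ∀ y, R z y → BadRel R k y

theorem badRel_mono {W : Type} {R : W → W → Prop} :
    ∀ (k : ℕ) (z : W), BadRel R k z → BadRel R (k+1) z
  | 0, _, h => fun y hy => absurd hy (h y)
  | k+1, _, h => fun y hy => badRel_mono k y (h y hy)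

theorem badRel_le {W : Type} {R : W → W → Prop} {m n : ℕ} (hmn : m ≤ n) :
    ∀ z : W, BadRel R m z → BadRel R n z := by
  induction hmn with
  | refl => exact fun z h => h
  | step _ ih => exact fun z h => badRel_mono _ z (ih z h)

theorem btruth_var {F : Frame2} {V : ℕ → F.W → Prop} {w : F.W} {n : ℕ} :
    BTruth F V w (.var n) ↔ V n w := Iff.rfl

theorem btruth_bot {F : Frame2} {V : ℕ → F.W → Prop} {w : F.W} :
    BTruth F V w .bot ↔ False := Iff.rfl

theorem btruth_imp {F : Frame2} {V : ℕ → F.W → Prop} {w : F.W} {a b : BForm} :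
    BTruth F V w (.imp a b) ↔ (BTruth F V w a → BTruth F V w b) := Iff.rfl

theorem btruth_box {F : Frame2} {V : ℕ → F.W → Prop} {w : F.W} {i : Fin 2} {a : BForm} :
    BTruth F V w (.box i a) ↔ ∀ v, F.R i w v → BTruth F V v a := Iff.rfl

theorem btruth_neg {F : Frame2} {V : ℕ → F.W → Prop} {w : F.W} {a : BForm} :
    BTruth F V w (.neg a) ↔ ¬ BTruth F V w a := Iff.rfl

theorem btruth_and {F : Frame2} {V : ℕ → F.W → Prop} {w : F.W} {a b : BForm} :
    BTruth F V w (.and a b) ↔ BTruth F V w a ∧ BTruth F V w b := by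
  show ((BTruth F V w a → (BTruth F V w b → False)) → False) ↔ _
  tauto

theorem btruth_dia {F : Frame2} {V : ℕ → F.W → Prop} {w : F.W} {i : Fin 2} {a : BForm} :
    BTruth F V w (.dia i a) ↔ ∃ v, F.R i w v ∧ BTruth F V v a := by
  show ((∀ v, F.R i w v → (BTruth F V v a → False)) → False) ↔ _
  constructor
  · intro h
    by_contra hn
    push_neg at hn
    exact h fun v hv ha => hn v hv ha
  · rintro ⟨v, hv, ha⟩ hall
    exact hall v hv ha

/-- **Lemma 1.** If the 2-frame `F` has weakly connected `R0`, and `R0, R1` commute and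
are confluent, then satisfiability of `φ∞` in `F` forces `F` to be infinite. -/
theorem infinite_of_phiInf_sat (F : Frame2)
    (hwc : WeaklyConnected (F.R 0))
    (hl : Lcom F) (hr : Rcom F) (hc : Conf F)
    (V : ℕ → F.W → Prop) (w : F.W) (h : BTruth F V w phiInf) :
    Infinite F.W := by
  classical
  simp only [phiInf, pV, btruth_and, btruth_dia, btruth_box, btruth_imp, btruth_neg,
    btruth_var, btruth_bot] at h
  obtain ⟨⟨r, hwr, z0, hrz, hpz, hz0dead⟩, h2, h3⟩ := h
  -- transfer lemmas for `BadRel` along `R1`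
  have lemA : ∀ (k : ℕ) (c z : F.W), F.R 1 c z → BadRel (F.R 0) k z → BadRel (F.R 0) k c := by
    intro k
    induction k with
    | zero =>
      intro c z h1 hb g hg
      obtain ⟨u, hu, -⟩ := hc c z g h1 hg
      exact hb u hu
    | succ k ih =>
      intro c z h1 hb g hg
      obtain ⟨u, hu, hgu⟩ := hc c z g h1 hg
      exact ih g u hgu (hb u hu)
  have lemC : ∀ (k : ℕ) (c z : F.W), F.R 1 c z → BadRel (F.R 0) k c → BadRel (F.R 0) k z := by
    intro k
    induction k with
    | zero =>
      intro c z h1 hb t ht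
      obtain ⟨g, hg, -⟩ := hr c z t h1 ht
      exact hb g hg
    | succ k ih =>
      intro c z h1 hb t ht
      obtain ⟨g, hg, hgt⟩ := hr c z t h1 ht
      exact ih g t hgt (hb g hg)
  -- main inductive construction
  have main : ∀ n : ℕ, ∃ u : F.W,
      (∃ t, F.R 1 w t ∧ F.R 0 t u) ∧
      (V 0 u ∧ (∀ y, F.R 0 u y → ¬ V 0 y) ∧ (∀ y, F.R 0 u y → ∀ z, F.R 0 y z → ¬ V 0 z)) ∧
      BadRel (F.R 0) n u ∧ (∀ m, m < n → ¬ BadRel (F.R 0) m u) := by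
    intro n
    induction n with
    | zero =>
      refine ⟨z0, ⟨r, hwr, hrz⟩,
        ⟨hpz, fun y hy _ => hz0dead y hy, fun y hy z _ _ => hz0dead y hy⟩,
        fun y hy => hz0dead y hy, fun m hm => absurd hm (Nat.not_lt_zero m)⟩
    | succ n ih =>
      obtain ⟨u, ⟨t, hwt, htu⟩, ⟨hpu, hu1, hu2⟩, hbad, hnbad⟩ := ih
      obtain ⟨x, htx, ⟨yp, hxyp, hpyp⟩, hx2⟩ := h2 t hwt ⟨u, htu, hpu⟩
      have hxu : F.R 0 x u := by
        rcases hwc t x u htx htu with he | h1 | h2'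
        · exact absurd hpyp (hu1 yp (he ▸ hxyp))
        · exact h1
        · exact absurd hpyp (hu2 x h2' yp hxyp)
      obtain ⟨v, hwv, hvx⟩ := hr w t x hwt htx
      obtain ⟨u', hvu', hLu'⟩ := h3 v hwv ⟨x, hvx, ⟨yp, hxyp, hpyp⟩, hx2⟩
      have hbadx : BadRel (F.R 0) (n+1) x := by
        intro y hy
        rcases hwc x y u hy hxu with he | h1 | h2'
        · exact he ▸ hbad
        · exact absurd hpu (hx2 y hy u h1)
        · cases n with
          | zero => exact absurd h2' (hbad y)
          | succ k => exact badRel_mono k y (hbad y h2')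
      have hbadu' : BadRel (F.R 0) (n+1) u' :=
        lemC (n+1) v u' hvu' (lemA (n+1) v x hvx hbadx)
      have hnbadu' : ∀ m, m < n + 1 → ¬ BadRel (F.R 0) m u' := by
        intro m hm hbm
        have hbn : BadRel (F.R 0) n u' := badRel_le (Nat.lt_succ_iff.mp hm) u' hbm
        have hbxn : BadRel (F.R 0) n x := lemC n v x hvx (lemA n v u' hvu' hbn)
        cases n with
        | zero => exact hbxn u hxu
        | succ k => exact hnbad k (Nat.lt_succ_self k) (hbxn u hxu)
      obtain ⟨t', hwt', ht'u'⟩ := hl w v u' hwv hvu'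
      exact ⟨u', ⟨t', hwt', ht'u'⟩, hLu', hbadu', hnbadu'⟩
  choose f hf using main
  have hinj : Function.Injective f := by
    intro m n hmn
    by_contra hne
    rcases Nat.lt_or_ge m n with hlt | hge
    · exact (hf n).2.2.2 m hlt (hmn ▸ (hf m).2.2.1)
    · have hlt : n < m := lt_of_le_of_ne hge (Ne.symm hne)
      exact (hf m).2.2.2 n hlt (hmn ▸ (hf n).2.2.1)
  exact Infinite.of_injective f hinj
end

section
/- Let F be a countably infinite one-step rooted frame. Then the formula φ∞ is satisfiable in the product 2-frame (ω+1,>) × F, i.e., φ∞ holds at some point of some model based on (ω+1,>) × F. In fact, if r,y0,y1,... enumerates the domain of F with root r, then the valuation making p true exactly at the points (n, y_n) for n < ω satisfies φ∞ at the point (ω, r). -/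
set_option linter.unusedVariables false

/-- **Lemma 2.** If `F` is a countably infinite one-step rooted frame, then `φ∞` is
satisfiable in `(ω+1, >) × F`; in fact, if `r, y 0, y 1, …` enumerates the domain of `F`
(with root `r`), then under any valuation making `p` true exactly at the points
`(n, y n)` for `n < ω`, the formula `φ∞` holds at `(ω, r)`. -/
theorem phiInf_sat_in_product (F : Frame1)
    (hcount : Countable F.W) (hinf : Infinite F.W)
    (r : F.W) (hroot : ∀ w : F.W, w ≠ r → F.R r w)
    (y : ℕ → F.W) (hinj : Function.Injective y) (hner : ∀ n, y n ≠ r)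
    (hsurj : ∀ w : F.W, w = r ∨ ∃ n, w = y n) :
    (∃ V w, BTruth (prodFrame omegaSuccGt F) V w phiInf) ∧
    ∀ V : ℕ → (prodFrame omegaSuccGt F).W → Prop,
      (∀ a : (prodFrame omegaSuccGt F).W,
        V 0 a ↔ ∃ n : ℕ, a.1 = (n : WithTop ℕ) ∧ a.2 = y n) →
      BTruth (prodFrame omegaSuccGt F) V ((⊤ : WithTop ℕ), r) phiInf := by
  have main :
      ∀ V : ℕ → (prodFrame omegaSuccGt F).W → Prop,
      (∀ a : (prodFrame omegaSuccGt F).W,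
        V 0 a ↔ ∃ n : ℕ, a.1 = (n : WithTop ℕ) ∧ a.2 = y n) →
      BTruth (prodFrame omegaSuccGt F) V ((⊤ : WithTop ℕ), r) phiInf := by
    intro V hV
    have h10 : (1 : Fin 2) ≠ 0 := by decide
    simp only [phiInf, BForm.and, BForm.dia, BForm.neg, pV, BTruth, prodFrame, omegaSuccGt,
      if_true, if_neg h10, if_pos rfl]
    intro h
    apply h
    · -- conjunct 1 : ◇1◇0(p ∧ □0⊥)
      intro h1
      apply h1 ((⊤ : WithTop ℕ), y 0) ⟨hroot _ (hner 0), rfl⟩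
      intro h2
      apply h2 (((0 : ℕ) : WithTop ℕ), y 0) ⟨WithTop.coe_lt_top 0, rfl⟩
      intro h3
      apply h3 ((hV _).2 ⟨0, rfl, rfl⟩)
      rintro u ⟨hu, -⟩
      have hu' : u.1 < ((0 : ℕ) : WithTop ℕ) := hu
      simp only [Nat.cast_zero] at hu'
      exact absurd hu' (not_lt.2 zero_le)
    · intro hBC
      apply hBC
      · -- conjunct 2
        intro v hv hd hbox
        apply hd
        rintro u ⟨hu1, hu2⟩ hp
        obtain ⟨n, hn1, hn2⟩ := (hV u).1 hp
        have hv2n : v.2 = y n := hu2.trans hn2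
        refine hbox (((n + 1 : ℕ) : WithTop ℕ), v.2) ⟨?_, rfl⟩ ?_
        · show ((n + 1 : ℕ) : WithTop ℕ) < v.1
          rw [← hv.2]
          exact WithTop.coe_lt_top _
        · intro h4
          apply h4
          · -- ◇0 p
            intro h5
            refine h5 (((n : ℕ) : WithTop ℕ), v.2) ⟨?_, rfl⟩ ?_
            · show ((n : ℕ) : WithTop ℕ) < ((n + 1 : ℕ) : WithTop ℕ)
              exact_mod_cast n.lt_succ_self
            · exact (hV _).2 ⟨n, rfl, hv2n⟩
          · -- □0□0¬p
            rintro w ⟨hw1, hw2⟩ z ⟨hz1, hz2⟩ hpz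
            have hw1' : w.1 < ((n + 1 : ℕ) : WithTop ℕ) := hw1
            have hw2' : v.2 = w.2 := hw2
            obtain ⟨m, hm1, hm2⟩ := (hV z).1 hpz
            have hmn : m = n := hinj ((hm2.symm.trans hz2.symm).trans (hw2'.symm.trans hv2n))
            obtain ⟨k, hk, hkn⟩ := WithTop.lt_iff_exists_coe.1 hw1'
            rw [← Nat.cast_withTop] at hk hkn
            have hkn' : k < n + 1 := by exact_mod_cast hkn
            rw [hk, hm1] at hz1
            have : m < k := by exact_mod_cast hz1
            omega
      · -- conjunct 3
        rintro v ⟨hv1, hv2⟩ hD h6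
        obtain ⟨k, hk⟩ := WithTop.ne_top_iff_exists.1 hv1.ne
        rw [← Nat.cast_withTop] at hk
        refine h6 (v.1, y k) ⟨?_, rfl⟩ ?_
        · exact hv2 ▸ hroot _ (hner k)
        intro h7
        apply h7 ((hV _).2 ⟨k, hk.symm, rfl⟩)
        intro h8
        apply h8
        · -- □0¬p
          rintro u ⟨hu1, hu2⟩ hp
          have hu1' : u.1 < v.1 := hu1
          have hu2' : y k = u.2 := hu2
          obtain ⟨m, hm1, hm2⟩ := (hV u).1 hp
          have hmk : m = k := hinj (hm2.symm.trans hu2'.symm)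
          rw [hm1, ← hk] at hu1'
          have : m < k := by exact_mod_cast hu1'
          omega
        · -- □0□0¬p
          rintro u ⟨hu1, hu2⟩ z ⟨hz1, hz2⟩ hp
          have hu1' : u.1 < v.1 := hu1
          have hu2' : y k = u.2 := hu2
          obtain ⟨m, hm1, hm2⟩ := (hV z).1 hp
          have hmk : m = k := hinj ((hm2.symm.trans hz2.symm).trans hu2'.symm)
          rw [← hk] at hu1'
          obtain ⟨j, hj, hjk⟩ := WithTop.lt_iff_exists_coe.1 hu1'
          rw [← Nat.cast_withTop] at hj hjk
          have hjk' : j < k := by exact_mod_cast hjk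
          rw [hj, hm1] at hz1
          have : m < j := by exact_mod_cast hz1
          omega
  exact ⟨⟨fun _ a => ∃ n : ℕ, a.1 = (n : WithTop ℕ) ∧ a.2 = y n, ((⊤ : WithTop ℕ), r),
    main _ fun a => Iff.rfl⟩, main⟩
end

section
/- Let M be a model based on a 2-frame (W,R0,R1). If R0 is transitive, then the tick-relation R̄0^M is transitive, R̄0^M ⊆ R0, and R̄0^M absorbs R0 on both sides: if xR0y and y R̄0^M z then x R̄0^M z, and if x R̄0^M y and yR0z then x R̄0^M z. -/
set_option linter.unusedVariables false

/-! ### The tick trick -/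

/-- The fixed propositional variable `t`. -/
def tV : BForm := .var 1

/-- The tick-relation `R̄0^M`: `x R̄0^M y` iff there is `z` with `x R0 z`, the truth value
of `t` flips from `x` to `z`, and `z = y` or `z R0 y`. -/
def tickRel (F : Frame2) (V : ℕ → F.W → Prop) (x y : F.W) : Prop :=
  ∃ z, F.R 0 x z ∧ (BTruth F V x tV ↔ ¬ BTruth F V z tV) ∧ (z = y ∨ F.R 0 z y)

/-- The defined diamond
`◆0ψ = [t → ◇0(¬t ∧ (ψ ∨ ◇0ψ))] ∧ [¬t → ◇0(t ∧ (ψ ∨ ◇0ψ))]`. -/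
def blackDia (ψ : BForm) : BForm :=
  .and (.imp tV (.dia 0 (.and (.neg tV) (.or ψ (.dia 0 ψ)))))
    (.imp (.neg tV) (.dia 0 (.and tV (.or ψ (.dia 0 ψ)))))

/-- The defined box `■0ψ = ¬◆0¬ψ`. -/
def blackBox (ψ : BForm) : BForm := .neg (blackDia (.neg ψ))

/-- The tick axiom `(t ∨ ◇1 t → t ∧ □1 t) ∧ □0(t ∨ ◇1 t → t ∧ □1 t)`. -/
def tickAx : BForm :=
  .and (.imp (.or tV (.dia 1 tV)) (.and tV (.box 1 tV)))
    (.box 0 (.imp (.or tV (.dia 1 tV)) (.and tV (.box 1 tV))))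

/-- **Claim 1.** If `R0` is transitive, then the tick-relation `R̄0^M` is transitive,
is contained in `R0`, and absorbs `R0` on both sides. -/
theorem tickRel_trans_of_trans (F : Frame2) (V : ℕ → F.W → Prop)
    (ht : Transitive (F.R 0)) :
    Transitive (tickRel F V) ∧
    (∀ x y, tickRel F V x y → F.R 0 x y) ∧
    (∀ x y z, F.R 0 x y → tickRel F V y z → tickRel F V x z) ∧
    (∀ x y z, tickRel F V x y → F.R 0 y z → tickRel F V x z) := by
  have hsub : ∀ x y, tickRel F V x y → F.R 0 x y := by
    rintro x y ⟨z, hxz, _, rfl | hzy⟩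
    · exact hxz
    · exact ht hxz hzy
  have hleft : ∀ x y z, F.R 0 x y → tickRel F V y z → tickRel F V x z := by
    rintro x y z hxy ⟨w, hyw, hflip, hwz⟩
    by_cases h : BTruth F V x tV ↔ ¬ BTruth F V w tV
    · exact ⟨w, ht hxy hyw, h, hwz⟩
    · refine ⟨y, hxy, ?_, Or.inr ?_⟩
      · revert h hflip; tauto
      · rcases hwz with rfl | hwz
        · exact hyw
        · exact ht hyw hwz
  have hright : ∀ x y z, tickRel F V x y → F.R 0 y z → tickRel F V x z := by
    rintro x y z ⟨w, hxw, hflip, hwy⟩ hyz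
    refine ⟨w, hxw, hflip, Or.inr ?_⟩
    rcases hwy with rfl | hwy
    · exact hyz
    · exact ht hwy hyz
  exact ⟨fun x y z hxy hyz => hleft x y z (hsub x y hxy) hyz, hsub, hleft, hright⟩
end

section
/- Let M be a model based on a 2-frame (W,R0,R1). Then the defined operator ◆0 behaves like a modal diamond with respect to the tick-relation R̄0^M: for every bimodal formula ψ and every x ∈ W, M,x ⊨ ◆0ψ if and only if there exists y ∈ W with x R̄0^M y and M,y ⊨ ψ. -/
set_option linter.unusedVariables false

lemma BTruth_and (F : Frame2) (V : ℕ → F.W → Prop) (w : F.W) (φ ψ : BForm) :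
    BTruth F V w (.and φ ψ) ↔ BTruth F V w φ ∧ BTruth F V w ψ := by
  show ((BTruth F V w φ → (BTruth F V w ψ → False)) → False) ↔ _
  tauto

lemma BTruth_or (F : Frame2) (V : ℕ → F.W → Prop) (w : F.W) (φ ψ : BForm) :
    BTruth F V w (.or φ ψ) ↔ BTruth F V w φ ∨ BTruth F V w ψ := by
  show (((BTruth F V w φ → False)) → BTruth F V w ψ) ↔ _
  tauto

lemma BTruth_neg (F : Frame2) (V : ℕ → F.W → Prop) (w : F.W) (φ : BForm) :
    BTruth F V w (.neg φ) ↔ ¬ BTruth F V w φ := Iff.rfl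

lemma BTruth_imp (F : Frame2) (V : ℕ → F.W → Prop) (w : F.W) (φ ψ : BForm) :
    BTruth F V w (.imp φ ψ) ↔ (BTruth F V w φ → BTruth F V w ψ) := Iff.rfl

lemma BTruth_dia (F : Frame2) (V : ℕ → F.W → Prop) (w : F.W) (i : Fin 2) (φ : BForm) :
    BTruth F V w (.dia i φ) ↔ ∃ v, F.R i w v ∧ BTruth F V v φ := by
  show ((∀ v, F.R i w v → (BTruth F V v φ → False)) → False) ↔ _
  constructor
  · intro h
    by_contra hc
    push_neg at hc
    exact h fun v hv hφ => hc v hv hφ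
  · rintro ⟨v, hv, hφ⟩ h
    exact h v hv hφ

/-- `◆0` behaves like a modal diamond with respect to the tick-relation `R̄0^M`. -/
theorem blackDia_iff_tickRel (F : Frame2) (V : ℕ → F.W → Prop)
    (ψ : BForm) (x : F.W) :
    BTruth F V x (blackDia ψ) ↔ ∃ y, tickRel F V x y ∧ BTruth F V y ψ := by
  simp only [blackDia, BTruth_and, BTruth_or, BTruth_imp, BTruth_neg, BTruth_dia, tickRel]
  constructor
  · rintro ⟨h1, h2⟩
    by_cases hx : BTruth F V x tV
    · obtain ⟨z, hxz, hzt, hψ⟩ := h1 hx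
      have hiff : BTruth F V x tV ↔ ¬ BTruth F V z tV := by tauto
      rcases hψ with hz | ⟨y, hzy, hy⟩
      · exact ⟨z, ⟨z, hxz, hiff, Or.inl rfl⟩, hz⟩
      · exact ⟨y, ⟨z, hxz, hiff, Or.inr hzy⟩, hy⟩
    · obtain ⟨z, hxz, hzt, hψ⟩ := h2 hx
      have hiff : BTruth F V x tV ↔ ¬ BTruth F V z tV := by tauto
      rcases hψ with hz | ⟨y, hzy, hy⟩
      · exact ⟨z, ⟨z, hxz, hiff, Or.inl rfl⟩, hz⟩
      · exact ⟨y, ⟨z, hxz, hiff, Or.inr hzy⟩, hy⟩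
  · rintro ⟨y, ⟨z, hxz, hiff, hzy⟩, hy⟩
    have hdisj : BTruth F V z ψ ∨ ∃ v, F.R 0 z v ∧ BTruth F V v ψ := by
      rcases hzy with rfl | hzy
      · exact Or.inl hy
      · exact Or.inr ⟨y, hzy, hy⟩
    constructor
    · intro hx
      exact ⟨z, hxz, hiff.mp hx, hdisj⟩
    · intro hx
      exact ⟨z, hxz, by tauto, hdisj⟩
end

section
/- Let M be a model based on a 2-frame (W,R0,R1). If R0 is transitive and weakly connected, then the tick-relation R̄0^M satisfies the weak-connectedness-like property (wcon⁻): for all x,y,z, if x R̄0^M y and x R̄0^M z, then y R̄0^M z, or z R̄0^M y, or (for all w, y R̄0^M w iff z R̄0^M w). -/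
set_option linter.unusedVariables false

lemma tickRel_key (F : Frame2) (V : ℕ → F.W → Prop)
    (ht : Transitive (F.R 0)) (hwc : WeaklyConnected (F.R 0)) :
    ∀ y z, F.R 0 y z →
      tickRel F V y z ∨ ∀ w, tickRel F V y w ↔ tickRel F V z w := by
  intro y z hyz
  by_cases h : tickRel F V y z
  · exact Or.inl h
  right
  have hty : ¬ (BTruth F V y tV ↔ ¬ BTruth F V z tV) :=
    fun hf => h ⟨z, hyz, hf, Or.inl rfl⟩
  intro w
  constructor
  · rintro ⟨s, hys, hfs, hsw⟩
    rcases hwc y z s hyz hys with rfl | hzs | hsz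
    · exact absurd hfs hty
    · exact ⟨s, hzs, by tauto, hsw⟩
    · exact absurd ⟨s, hys, hfs, Or.inr hsz⟩ h
  · rintro ⟨s, hzs, hfs, hsw⟩
    exact ⟨s, ht hyz hzs, by tauto, hsw⟩

/-- **Claim 2.** If `R0` is transitive and weakly connected, then the tick-relation
`R̄0^M` satisfies the property (wcon⁻). -/
theorem tickRel_wcon (F : Frame2) (V : ℕ → F.W → Prop)
    (ht : Transitive (F.R 0)) (hwc : WeaklyConnected (F.R 0)) :
    ∀ x y z, tickRel F V x y → tickRel F V x z →
      tickRel F V y z ∨ tickRel F V z y ∨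
        (∀ w, tickRel F V y w ↔ tickRel F V z w) := by
  rintro x y z ⟨u, hxu, hfu, huy⟩ ⟨v, hxv, hfv, hvz⟩
  have hxy : F.R 0 x y := by rcases huy with rfl | h; exact hxu; exact ht hxu h
  have hxz : F.R 0 x z := by rcases hvz with rfl | h; exact hxv; exact ht hxv h
  rcases hwc x y z hxy hxz with rfl | hyz | hzy
  · exact Or.inr (Or.inr fun w => Iff.rfl)
  · rcases tickRel_key F V ht hwc y z hyz with h | h
    · exact Or.inl h
    · exact Or.inr (Or.inr h)
  · rcases tickRel_key F V ht hwc z y hzy with h | h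
    · exact Or.inr (Or.inl h)
    · exact Or.inr (Or.inr fun w => (h w).symm)
end

section
/- Let M be a model based on a 2-frame (W,R0,R1), let R0 be transitive, and suppose M,r ⊨ (t ∨ ◇1t → t ∧ □1t) ∧ □0(t ∨ ◇1t → t ∧ □1t) for a point r. Then: (i) if (lcom) holds in the frame, then for all y,z: r R̄0^M y R1 z implies there is u with r R1 u R̄0^M z; (ii) if (rcom) holds, then for all x,y,z: (x = r or rR0x) and x R1 y R̄0^M z imply there is u with x R̄0^M u R1 z; (iii) if (conf) holds, then for all x,y,z: rR0x, x R̄0^M z and xR1y imply there is u with y R̄0^M u and z R1 u. -/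
set_option linter.unusedVariables false

/-- **Claim 3.** Suppose `R0` is transitive and the tick axiom holds at `r`. Then
(lcom), (rcom) and (conf) transfer to the corresponding properties of the
tick-relation, relativised to `r`. -/
theorem tickRel_com_conf (F : Frame2) (V : ℕ → F.W → Prop) (r : F.W)
    (ht : Transitive (F.R 0)) (htick : BTruth F V r tickAx) :
    (Lcom F → ∀ y z, tickRel F V r y → F.R 1 y z →
      ∃ u, F.R 1 r u ∧ tickRel F V u z) ∧
    (Rcom F → ∀ x y z, (x = r ∨ F.R 0 r x) → F.R 1 x y → tickRel F V y z →
      ∃ u, tickRel F V x u ∧ F.R 1 u z) ∧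
    (Conf F → ∀ x y z, F.R 0 r x → tickRel F V x z → F.R 1 x y →
      ∃ u, tickRel F V y u ∧ F.R 1 z u) := by
  classical
  simp only [tickAx, tV, BForm.and, BForm.or, BForm.neg, BForm.dia, BTruth] at htick
  -- Extract the two conjuncts of the tick axiom classically.
  have hpair : (((V 1 r → False) → (∀ v, F.R 1 r v → V 1 v → False) → False) →
        (V 1 r → (∀ v, F.R 1 r v → V 1 v) → False) → False) ∧
      ∀ w, F.R 0 r w →
        (((V 1 w → False) → (∀ v, F.R 1 w v → V 1 v → False) → False) →
          (V 1 w → (∀ v, F.R 1 w v → V 1 v) → False) → False) := by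
    by_contra hc
    exact htick fun a b => hc ⟨a, b⟩
  -- Key: t-values agree along R1 from any point in {r} ∪ R0(r).
  have H : ∀ w, (w = r ∨ F.R 0 r w) → ∀ v, F.R 1 w v → (V 1 w ↔ V 1 v) := by
    intro w hw v hv
    have hQ := hw.elim (fun h => h ▸ hpair.1) (fun h => hpair.2 w h)
    constructor
    · intro hVw
      by_contra hVv
      exact hQ (fun hna _ => hna hVw) (fun _ allB => hVv (allB v hv))
    · intro hVv
      by_contra hVw
      exact hQ (fun _ hall => hall v hv hVv) (fun hA _ => hVw hA)
  simp only [tickRel, tV, BTruth]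
  refine ⟨?_, ?_, ?_⟩
  · -- (lcom)
    intro hl y z hry hyz
    obtain ⟨w, hrw, hflip, hwy⟩ := hry
    rcases hwy with rfl | hwy
    · obtain ⟨u, hru, huz⟩ := hl r w z hrw hyz
      have h1 := H r (Or.inl rfl) u hru
      have h2 := H w (Or.inr hrw) z hyz
      exact ⟨u, hru, z, huz, by tauto, Or.inl rfl⟩
    · obtain ⟨v, hwv, hvz⟩ := hl w y z hwy hyz
      obtain ⟨u, hru, huv⟩ := hl r w v hrw hwv
      have h1 := H r (Or.inl rfl) u hru
      have h2 := H w (Or.inr hrw) v hwv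
      exact ⟨u, hru, v, huv, by tauto, Or.inr hvz⟩
  · -- (rcom)
    intro hr' x y z hx hxy hyz
    obtain ⟨w, hyw, hflip, hwz⟩ := hyz
    obtain ⟨v, hxv, hvw⟩ := hr' x y w hxy hyw
    have hrv : F.R 0 r v := hx.elim (fun h => h ▸ hxv) (fun h => ht h hxv)
    have h1 := H x hx y hxy
    have h2 := H v (Or.inr hrv) w hvw
    have hflipxv : V 1 x ↔ ¬ V 1 v := by tauto
    rcases hwz with rfl | hwz
    · exact ⟨v, ⟨v, hxv, hflipxv, Or.inl rfl⟩, hvw⟩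
    · obtain ⟨u, hvu, huz⟩ := hr' v w z hvw hwz
      exact ⟨u, ⟨v, hxv, hflipxv, Or.inr hvu⟩, huz⟩
  · -- (conf)
    intro hc x y z hrx hxz hxy
    obtain ⟨w, hxw, hflip, hwz⟩ := hxz
    have h1 := H x (Or.inr hrx) y hxy
    rcases hwz with rfl | hwz
    · obtain ⟨u, hyu, hzu⟩ := hc x y w hxy hxw
      have h2 := H w (Or.inr (ht hrx hxw)) u hzu
      exact ⟨u, ⟨u, hyu, by tauto, Or.inl rfl⟩, hzu⟩
    · obtain ⟨v, hyv, hwv⟩ := hc x y w hxy hxw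
      obtain ⟨u, hvu, hzu⟩ := hc w v z hwv hwz
      have h2 := H w (Or.inr (ht hrx hxw)) v hwv
      exact ⟨u, ⟨v, hyv, by tauto, Or.inr hvu⟩, hzu⟩
end
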